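/- arXiv:1205.4490 — 2 statements merged into one kernel-verified Lean document; each statement's English description precedes it below -/
import Mathlib

section
/- Let I = {1,−1}, let Σ = I^ℕ be the full shift, let Ψ: I* → (ℤ,+) be the canonical semigroup homomorphism with Ψ(1) = 1 and Ψ(−1) = −1, and let c: (ℤ,+) → (ℝ⁺,·) be a group homomorphism. Define φ: Σ → ℝ by φ(x) = log c(Ψ(x₁)). Then φ∘π₁ is recurrent and null recurrent with respect to σ⋊Ψ, P(φ∘π₁, σ⋊Ψ) = log 2, P(φ, σ) = log(c(1) + c(−1)), and log 2 ≤ log(c(1)+c(−1)) with equality if and only if c is the trivial homomorphism. -/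
open scoped ENNReal NNReal
open Filter MeasureTheory

namespace CMS

universe u v

variable {A : Type u} {G : Type v}

/-- Admissible sequences for the incidence relation `T`. -/
def Adm (T : A → A → Prop) (x : ℕ → A) : Prop := ∀ n : ℕ, T (x n) (x (n + 1))

/-- The countable Markov shift with alphabet `A` and incidence relation `T`. -/
abbrev MShift (T : A → A → Prop) : Type u := {x : ℕ → A // Adm T x}

noncomputable instance instMSMShift (T : A → A → Prop) : MeasurableSpace (MShift T) :=
  MeasurableSpace.comap (fun x => x.1) (@MeasurableSpace.pi ℕ (fun _ => A) (fun _ => ⊤))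

instance instTopMShift (T : A → A → Prop) : TopologicalSpace (MShift T) :=
  TopologicalSpace.induced (fun x => x.1) (@Pi.topologicalSpace ℕ (fun _ => A) (fun _ => ⊥))

/-- The left shift map. -/
def shift (T : A → A → Prop) : MShift T → MShift T :=
  fun x => ⟨fun n => x.1 (n + 1), fun n => x.2 (n + 1)⟩

/-- Birkhoff (ergodic) sum `S_n f`. -/
noncomputable def birk (T : A → A → Prop) (f : MShift T → ℝ) (n : ℕ) (x : MShift T) : ℝ :=
  ∑ i ∈ Finset.range n, f ((shift T)^[i] x)

/-- `f` is Hölder continuous w.r.t. one of the metrics `d_α`. -/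
def Holder (T : A → A → Prop) (f : MShift T → ℝ) : Prop :=
  ∃ α : ℝ, 0 < α ∧ ∃ C : ℝ, ∀ (n : ℕ) (x y : MShift T),
    (∀ k < n + 1, x.1 k = y.1 k) → |f x - f y| ≤ C * Real.exp (-α * (n + 1 : ℕ))

/-- The cylinder set of a finite word `w`. -/
def cyl (T : A → A → Prop) (w : List A) : Set (MShift T) :=
  {x | ∀ (k : ℕ) (hk : k < w.length), x.1 k = w.get ⟨k, hk⟩}

/-- The partition function `Z_n(f,a,σ)` (summed over periodic points). -/
noncomputable def Zn (T : A → A → Prop) (f : MShift T → ℝ) (a : A) (n : ℕ) : ℝ≥0∞ :=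
  ∑' x : {x : MShift T // x.1 0 = a ∧ (shift T)^[n] x = x},
    ENNReal.ofReal (Real.exp (birk T f n x.1))

/-- The restricted partition function `Z_n^*(f,a,σ)`. -/
noncomputable def Znstar (T : A → A → Prop) (f : MShift T → ℝ) (a : A) (n : ℕ) : ℝ≥0∞ :=
  ∑' x : {x : MShift T // x.1 0 = a ∧ (shift T)^[n] x = x ∧ ∀ k, 0 < k → k < n → x.1 k ≠ a},
    ENNReal.ofReal (Real.exp (birk T f n x.1))

/-- `e^{P(f,σ)}` computed at the letter `a`, i.e. `limsup Z_n(f,a)^{1/n}`. -/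
noncomputable def gLambda (T : A → A → Prop) (f : MShift T → ℝ) (a : A) : ℝ≥0∞ :=
  Filter.limsup (fun n : ℕ => (Zn T f a n) ^ ((n : ℝ)⁻¹)) Filter.atTop

/-- The exponential of the Gurevič pressure (supremum over letters, which for an
irreducible shift agrees with the common value at every letter, and for a reducible
shift with the supremum over irreducible components). -/
noncomputable def expPressure (T : A → A → Prop) (f : MShift T → ℝ) : ℝ≥0∞ :=
  ⨆ a : A, gLambda T f a

/-- The Gurevič pressure `P(f,σ)`, as an extended real number. -/
noncomputable def pressure (T : A → A → Prop) (f : MShift T → ℝ) : EReal :=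
  ENNReal.log (expPressure T f)

/-- `f` is recurrent: `∑_n e^{-nP} Z_n(f,a,σ) = ∞` for some (hence all) `a`. -/
def Recurrent (T : A → A → Prop) (f : MShift T → ℝ) : Prop :=
  ∃ a : A, ∑' n : ℕ, (expPressure T f)⁻¹ ^ (n + 1) * Zn T f a (n + 1) = ∞

/-- `f` is transient if it is not recurrent. -/
def Transient (T : A → A → Prop) (f : MShift T → ℝ) : Prop := ¬ Recurrent T f

/-- `f` is positive recurrent: recurrent and `∑_n n e^{-nP} Z_n^*(f,a,σ) < ∞`. -/
def PosRecurrent (T : A → A → Prop) (f : MShift T → ℝ) : Prop :=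
  Recurrent T f ∧ ∃ a : A,
    ∑' n : ℕ, (n + 1 : ℝ≥0∞) * (expPressure T f)⁻¹ ^ (n + 1) * Znstar T f a (n + 1) < ∞

/-- `f` is null recurrent: recurrent and `∑_n n e^{-nP} Z_n^*(f,a,σ) = ∞`. -/
def NullRecurrent (T : A → A → Prop) (f : MShift T → ℝ) : Prop :=
  Recurrent T f ∧ ∃ a : A,
    ∑' n : ℕ, (n + 1 : ℝ≥0∞) * (expPressure T f)⁻¹ ^ (n + 1) * Znstar T f a (n + 1) = ∞

/-- The Markov shift is irreducible. -/
def Irreducible (T : A → A → Prop) : Prop :=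
  ∀ i j : A, ∃ w : List A, List.Chain' T (i :: (w ++ [j]))

/-- The Markov shift is topologically mixing. -/
def TopMixing (T : A → A → Prop) : Prop :=
  ∀ i j : A, ∃ n₀ : ℕ, ∀ n, n₀ ≤ n → ∃ w : List A, w.length = n ∧ List.Chain' T (i :: (w ++ [j]))

/-- The Markov shift is finitely primitive. -/
def FinPrim (T : A → A → Prop) : Prop :=
  ∃ (l : ℕ) (Λ : Finset (List A)), (∀ w ∈ Λ, w.length = l ∧ List.Chain' T w) ∧
    ∀ i j : A, ∃ w ∈ Λ, List.Chain' T (i :: (w ++ [j]))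

/-- Lengths of admissible loops. -/
def Loops (T : A → A → Prop) : Set ℕ := {n | 0 < n ∧ ∃ x : MShift T, (shift T)^[n] x = x}

/-- `p` is the period (the gcd of the lengths of admissible loops). -/
def IsPeriodOf (T : A → A → Prop) (p : ℕ) : Prop :=
  (∀ n ∈ Loops T, p ∣ n) ∧ ∀ q : ℕ, (∀ n ∈ Loops T, q ∣ n) → q ∣ p

section Ext

variable [Group G]

/-- The incidence relation of the group-extended Markov system `σ ⋊ Ψ` on the alphabet
`A × G`: this realizes the skew product `(ω,g) ↦ (σω, g·Ψ(ω₁))` as a Markov shift. -/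
def extT (T : A → A → Prop) (Ψ : A → G) : A × G → A × G → Prop :=
  fun q r => T q.1 r.1 ∧ r.2 = q.2 * Ψ q.1

/-- The canonical projection `π₁ : Σ × G → Σ`. -/
def proj (T : A → A → Prop) (Ψ : A → G) : MShift (extT T Ψ) → MShift T :=
  fun x => ⟨fun n => (x.1 n).1, fun n => (x.2 n).1⟩

/-- The lifted potential `φ ∘ π₁`. -/
def liftPot (T : A → A → Prop) (Ψ : A → G) (φ : MShift T → ℝ) : MShift (extT T Ψ) → ℝ :=
  fun x => φ (proj T Ψ x)

/-- The extension of `Ψ` to the free semigroup of words, `Ψ(ω₁ ⋯ ω_n) = Ψ(ω₁) ⋯ Ψ(ω_n)`. -/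
def wordΨ (Ψ : A → G) (w : List A) : G := (w.map Ψ).prod

/-- The point of `Σ × G` over the base point `x` with group coordinate `g` at time `0`. -/
def emb (T : A → A → Prop) (Ψ : A → G) (x : MShift T) (g : G) : MShift (extT T Ψ) :=
  ⟨fun n => (x.1 n, Nat.rec g (fun k gk => gk * Ψ (x.1 k)) n), fun n => ⟨x.2 n, rfl⟩⟩

/-- The product measure `μ × λ` on `Σ × G`, where `λ` is the counting (Haar) measure
on the countable discrete group `G`. -/
noncomputable def prodExt (T : A → A → Prop) (Ψ : A → G) (μ : Measure (MShift T)) :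
    Measure (MShift (extT T Ψ)) :=
  Measure.sum fun g : G => Measure.map (fun x => emb T Ψ x g) μ

/-- `c : G → (ℝ⁺, ·)` is a homomorphism into the multiplicative group of positive reals. -/
def IsPosHom (c : G → ℝ) : Prop := (∀ g, 0 < c g) ∧ ∀ g h : G, c (g * h) = c g * c h

/-- The modified potential `φ_c(x) = φ(x) − log c(Ψ(x₁))`. -/
noncomputable def potC (T : A → A → Prop) (Ψ : A → G) (φ : MShift T → ℝ) (c : G → ℝ) :
    MShift T → ℝ :=
  fun x => φ x - Real.log (c (Ψ (x.1 0)))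

/-- `∑_{k=1}^{n} e^{-kP} ∑_{ω ∈ Σ^k, Ψ(ω) = g} e^{sup S_k φ|[ω]}` (with `ρ = e^P`). -/
noncomputable def wordSum (T : A → A → Prop) (Ψ : A → G) (f : MShift T → ℝ) (ρ : ℝ≥0∞)
    (g : G) (n : ℕ) : ℝ≥0∞ :=
  ∑ k ∈ Finset.Icc 1 n, ρ⁻¹ ^ k *
    ∑' w : {w : List A // w.length = k ∧ w.Chain' T ∧ wordΨ Ψ w = g},
      ⨆ x ∈ cyl T w.1, ENNReal.ofReal (Real.exp (birk T f k x))

/-- `φ` is symmetric on average with respect to `Ψ`. -/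
def SymAvg (T : A → A → Prop) (Ψ : A → G) (φ : MShift T → ℝ) : Prop :=
  (⨆ g : G, Filter.limsup (fun n : ℕ =>
      wordSum T Ψ φ (expPressure (extT T Ψ) (liftPot T Ψ φ)) g n /
      wordSum T Ψ φ (expPressure (extT T Ψ) (liftPot T Ψ φ)) g⁻¹ n) Filter.atTop) < ∞

/-- The left translation action of `G` on `Σ × G`, `(ω,γ) ↦ (ω, gγ)`. -/
def gAct (T : A → A → Prop) (Ψ : A → G) (g : G) (x : MShift (extT T Ψ)) :
    MShift (extT T Ψ) :=
  ⟨fun n => ((x.1 n).1, g * (x.1 n).2), fun n => ⟨(x.2 n).1, by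
    show g * (x.1 (n + 1)).2 = g * (x.1 n).2 * Ψ ((x.1 n).1)
    rw [(x.2 n).2, mul_assoc]⟩⟩

end Ext

section Ops

/-- Prepend the letter `i` to the sequence `x`. -/
def consSeq (T : A → A → Prop) (i : A) (x : MShift T) (h : T i (x.1 0)) : MShift T :=
  ⟨fun n => Nat.rec i (fun k _ => x.1 k) n, fun n => by
    cases n with
    | zero => exact h
    | succ m => exact x.2 m⟩

/-- The Perron–Frobenius operator `L_f u (x) = ∑_{Ty = x} e^{f(y)} u(y)`. -/
noncomputable def PF (T : A → A → Prop) (f u : MShift T → ℝ) (x : MShift T) : ℝ :=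
  ∑' i : {i : A // T i (x.1 0)}, Real.exp (f (consSeq T i.1 x i.2)) * u (consSeq T i.1 x i.2)

/-- The Perron–Frobenius operator on `ℝ≥0∞`-valued functions. -/
noncomputable def PFe (T : A → A → Prop) (f : MShift T → ℝ) (u : MShift T → ℝ≥0∞)
    (x : MShift T) : ℝ≥0∞ :=
  ∑' i : {i : A // T i (x.1 0)},
    ENNReal.ofReal (Real.exp (f (consSeq T i.1 x i.2))) * u (consSeq T i.1 x i.2)

/-- `ν` is fixed by `ρ⁻¹ L_f^*`, i.e. `ν(L_f u) = ρ ν(u)` for all (nonnegative measurable) `u`. -/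
def IsEigenMeasure (T : A → A → Prop) (f : MShift T → ℝ) (ρ : ℝ≥0∞)
    (ν : Measure (MShift T)) : Prop :=
  ∀ u : MShift T → ℝ≥0∞, Measurable u → ∫⁻ x, PFe T f u x ∂ν = ρ * ∫⁻ x, u x ∂ν

/-- `h` is bounded on cylindrical sets. -/
def BddOnCyl (T : A → A → Prop) (h : MShift T → ℝ) : Prop :=
  ∀ w : List A, w ≠ [] → w.Chain' T → ∃ M : ℝ, ∀ x ∈ cyl T w, h x ≤ M

/-- `h` is a positive continuous eigenfunction of `L_f` with eigenvalue `ρ`,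
bounded on cylindrical sets. -/
def IsEigenFun (T : A → A → Prop) (f : MShift T → ℝ) (ρ : ℝ) (h : MShift T → ℝ) : Prop :=
  Continuous h ∧ (∀ x, 0 < h x) ∧ BddOnCyl T h ∧ ∀ x, PF T f h x = ρ * h x

/-- `ν` is positive and finite on cylindrical sets. -/
def PosFinOnCyl (T : A → A → Prop) (ν : Measure (MShift T)) : Prop :=
  ∀ w : List A, w ≠ [] → w.Chain' T → 0 < ν (cyl T w) ∧ ν (cyl T w) < ∞

/-- `μ` is invariant under the shift. -/
def ShiftInvariant (T : A → A → Prop) (μ : Measure (MShift T)) : Prop :=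
  ∀ s : Set (MShift T), MeasurableSet s → μ ((shift T) ⁻¹' s) = μ s

/-- `μ` is the (`σ`-invariant, probability) Gibbs measure of `f`. -/
def IsGibbs (T : A → A → Prop) (f : MShift T → ℝ) (μ : Measure (MShift T)) : Prop :=
  IsProbabilityMeasure μ ∧ ShiftInvariant T μ ∧
  ∃ C : ℝ≥0∞, 0 < C ∧ C < ∞ ∧ ∀ w : List A, w ≠ [] → w.Chain' T → ∀ x ∈ cyl T w,
    C⁻¹ * (ENNReal.ofReal (Real.exp (birk T f w.length x)) * (expPressure T f)⁻¹ ^ w.length)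
      ≤ μ (cyl T w) ∧
    μ (cyl T w)
      ≤ C * (ENNReal.ofReal (Real.exp (birk T f w.length x)) * (expPressure T f)⁻¹ ^ w.length)

/-- A measure is conservative for `S` if every measurable wandering set is null. -/
def Conserv {X : Type*} [MeasurableSpace X] (S : X → X) (μ : Measure X) : Prop :=
  ∀ W : Set X, MeasurableSet W →
    (Pairwise fun m n : ℕ => Disjoint (S^[m] ⁻¹' W) (S^[n] ⁻¹' W)) → μ W = 0

/-- A discrete group is amenable: there is a finitely additive, left-invariant
probability measure on the power set of `G`. -/
def IsAmenable (G : Type v) [Group G] : Prop :=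
  ∃ ν : Set G → ℝ, (∀ s, 0 ≤ ν s) ∧ ν Set.univ = 1 ∧
    (∀ s t : Set G, Disjoint s t → ν (s ∪ t) = ν s + ν t) ∧
    ∀ (g : G) (s : Set G), ν ((fun x => g * x) '' s) = ν s

end Ops

end CMS

namespace CMS

section Helpers

open ENNReal Real

universe u' v'

lemma shift_iter {A : Type u'} (T : A → A → Prop) (x : MShift T) (k i : ℕ) :
    ((shift T)^[k] x).1 i = x.1 (i + k) := by
  induction k generalizing x with
  | zero => rfl
  | succ k ih =>
    rw [Function.iterate_succ_apply, ih]
    show x.1 (i + k + 1) = x.1 (i + (k + 1))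
    congr 1 <;> omega

lemma periodic_mod {α : Type*} (u : ℕ → α) (n : ℕ) (h : ∀ i, u (i + n) = u i) (k : ℕ) :
    u k = u (k % n) := by
  rcases Nat.eq_zero_or_pos n with hn | hn
  · simp [hn]
  induction k using Nat.strong_induction_on with
  | _ k ih =>
    rcases lt_or_ge k n with hk | hk
    · rw [Nat.mod_eq_of_lt hk]
    · have h1 : k - n + n = k := Nat.sub_add_cancel hk
      have h2 := h (k - n)
      rw [h1] at h2
      rw [h2, Nat.mod_eq_sub_mod hk]
      exact ih (k - n) (by omega)

lemma tsum_inv_succ_eq_top : ∑' m : ℕ, ((m : ℝ≥0∞) + 1)⁻¹ = ∞ := by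
  by_contra h
  have h1 : (fun m : ℕ => ((m : ℝ≥0∞) + 1)⁻¹)
      = fun m : ℕ => ((((m : ℝ≥0) + 1)⁻¹ : ℝ≥0) : ℝ≥0∞) := by
    funext m
    rw [ENNReal.coe_inv (by positivity)]
    push_cast
    rfl
  rw [h1] at h
  have h2 : Summable (fun m : ℕ => (((m : ℝ≥0) + 1)⁻¹ : ℝ≥0)) :=
    ENNReal.tsum_coe_ne_top_iff_summable.1 h
  have h3 : Summable (fun m : ℕ => (((m : ℕ) : ℝ) + 1)⁻¹) := by
    have := NNReal.summable_coe.2 h2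
    simpa using this
  apply Real.not_summable_natCast_inv
  rw [← summable_nat_add_iff 1]
  simpa using h3

/-- If `f` dominates a multiple of the harmonic sequence, its sum is infinite. -/
lemma tsum_eq_top_of_harmonic_le (f : ℕ → ℝ≥0∞) (C : ℝ≥0∞) (hC : C ≠ 0)
    (hf : ∀ m : ℕ, C * ((m : ℝ≥0∞) + 1)⁻¹ ≤ f m) : ∑' m, f m = ∞ := by
  have h1 : C * ∑' m : ℕ, ((m : ℝ≥0∞) + 1)⁻¹ ≤ ∑' m, f m := by
    rw [← ENNReal.tsum_mul_left]
    exact ENNReal.tsum_le_tsum hf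
  rw [tsum_inv_succ_eq_top, ENNReal.mul_top hC] at h1
  exact top_le_iff.1 h1

lemma rlim (x e : ℕ → ℝ) (hx : ∀ m, 0 < x m) (L : ℝ)
    (h : Filter.Tendsto (fun m => Real.log (x m) / e m) atTop (nhds L)) :
    Filter.Tendsto (fun m => ENNReal.ofReal (x m) ^ (e m)⁻¹) atTop
      (nhds (ENNReal.ofReal (Real.exp L))) := by
  have key : ∀ m, ENNReal.ofReal (x m) ^ (e m)⁻¹
      = ENNReal.ofReal (Real.exp (Real.log (x m) / e m)) := by
    intro m
    rw [ENNReal.ofReal_rpow_of_pos (hx m), Real.rpow_def_of_pos (hx m), div_eq_mul_inv]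
  simp only [key]
  exact (ENNReal.continuous_ofReal.tendsto _).comp ((Real.continuous_exp.tendsto L).comp h)

lemma tendsto_logdiv_base (K S : ℝ) (hK : 0 < K) (hS : 0 < S) :
    Filter.Tendsto (fun m : ℕ => Real.log (K * S ^ m) / ((m : ℝ) + 1)) atTop
      (nhds (Real.log S)) := by
  have t1 : Filter.Tendsto (fun m : ℕ => Real.log K / ((m : ℝ) + 1)) atTop (nhds 0) := by
    have := (tendsto_const_div_atTop_nhds_zero_nat (Real.log K)).comp
      (Filter.tendsto_add_atTop_nat 1)
    refine this.congr fun m => ?_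
    simp only [Function.comp_apply]
    push_cast
    ring
  have t2 : Filter.Tendsto (fun m : ℕ => ((m : ℝ) / ((m : ℝ) + 1)) * Real.log S) atTop
      (nhds (Real.log S)) := by
    have := (tendsto_natCast_div_add_atTop (1 : ℝ)).mul_const (Real.log S)
    simpa using this
  have := t1.add t2
  rw [zero_add] at this
  refine this.congr (fun m => ?_)
  rw [Real.log_mul (ne_of_gt hK) (by positivity), Real.log_pow]
  have hm : ((m : ℝ) + 1) ≠ 0 := by positivity
  field_simp
  try ring

lemma tendsto_logdiv_ext :
    Filter.Tendsto (fun m : ℕ => Real.log ((4 : ℝ) ^ (m + 1) / (4 * (m : ℝ) + 6)) /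
      (2 * (m : ℝ) + 2)) atTop (nhds (Real.log 2)) := by
  have hden : ∀ m : ℕ, (0 : ℝ) < 4 * (m : ℝ) + 6 := by intro m; positivity
  have t0 : Filter.Tendsto (fun y : ℝ => Real.log y / y) atTop (nhds 0) :=
    Real.isLittleO_log_id_atTop.tendsto_div_nhds_zero
  have tA : Filter.Tendsto (fun m : ℕ => (4 * (m : ℝ) + 6)) atTop atTop := by
    apply Filter.tendsto_atTop_mono (fun m : ℕ => ?_) tendsto_natCast_atTop_atTop
    nlinarith [Nat.cast_nonneg (α := ℝ) m]
  have t1 : Filter.Tendsto (fun m : ℕ => Real.log (4 * (m : ℝ) + 6) / (4 * (m : ℝ) + 6))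
      atTop (nhds 0) := t0.comp tA
  have t3 : Filter.Tendsto (fun m : ℕ => (2 : ℝ) / (2 * (m : ℝ) + 2)) atTop (nhds 0) := by
    have := (tendsto_const_div_atTop_nhds_zero_nat (2 : ℝ)).comp
      (Filter.tendsto_atTop_mono (fun m : ℕ => by omega : ∀ m : ℕ, m ≤ 2 * m + 2)
        Filter.tendsto_id)
    refine this.congr fun m => ?_
    simp only [Function.comp_apply, Function.comp]
    push_cast
    ring
  have t2 : Filter.Tendsto (fun m : ℕ => (4 * (m : ℝ) + 6) / (2 * (m : ℝ) + 2)) atTop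
      (nhds 2) := by
    have : Filter.Tendsto (fun m : ℕ => 2 + (2 : ℝ) / (2 * (m : ℝ) + 2)) atTop (nhds (2 + 0)) :=
      tendsto_const_nhds.add t3
    rw [add_zero] at this
    refine this.congr (fun m => ?_)
    have hm : (2 * (m : ℝ) + 2) ≠ 0 := by positivity
    field_simp
    ring
  have tB : Filter.Tendsto (fun m : ℕ => Real.log (4 * (m : ℝ) + 6) / (2 * (m : ℝ) + 2))
      atTop (nhds 0) := by
    have := t1.mul t2
    rw [zero_mul] at this
    refine this.congr (fun m => ?_)
    have h1 : (4 * (m : ℝ) + 6) ≠ 0 := ne_of_gt (hden m)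
    field_simp
  have tC : Filter.Tendsto (fun m : ℕ =>
      Real.log 2 - Real.log (4 * (m : ℝ) + 6) / (2 * (m : ℝ) + 2)) atTop
      (nhds (Real.log 2 - 0)) := tendsto_const_nhds.sub tB
  rw [sub_zero] at tC
  refine tC.congr (fun m => ?_)
  rw [Real.log_div (by positivity) (ne_of_gt (hden m)), Real.log_pow]
  have h4 : Real.log (4 : ℝ) = 2 * Real.log 2 := by
    rw [show (4 : ℝ) = 2 ^ 2 by norm_num, Real.log_pow]
    push_cast
    ring
  have hm : (2 * (m : ℝ) + 2) ≠ 0 := by positivity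
  field_simp
  rw [h4]
  push_cast
  ring

end Helpers

end CMS

namespace CMS

namespace Ex16

open ENNReal

def T0 : Bool → Bool → Prop := fun _ _ => True

def eps (b : Bool) : ℤ := if b then 1 else -1

def PS : Bool → Multiplicative ℤ := fun b => Multiplicative.ofAdd (if b then (1 : ℤ) else (-1 : ℤ))

lemma PS_eq (b : Bool) : PS b = Multiplicative.ofAdd (eps b) := rfl

/-- base periodic point from a word -/
def bpt {n : ℕ} (hn : 0 < n) (w : Fin n → Bool) : MShift T0 :=
  ⟨fun k => w ⟨k % n, Nat.mod_lt k hn⟩, fun _ => trivial⟩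

lemma bpt_lt {n : ℕ} (hn : 0 < n) (w : Fin n → Bool) (i : Fin n) :
    (bpt hn w).1 i.1 = w i := by
  show w _ = w i
  congr 1
  exact Fin.ext (Nat.mod_eq_of_lt i.2)

lemma bpt_per {n : ℕ} (hn : 0 < n) (w : Fin n → Bool) :
    (shift T0)^[n] (bpt hn w) = bpt hn w := by
  apply Subtype.ext
  funext i
  rw [shift_iter]
  show w _ = w _
  congr 1
  exact Fin.ext (by simp [Nat.add_mod_right])

/-- periodic points of the base shift are words -/
def eBase (a : Bool) (n : ℕ) (hn : 0 < n) :
    {w : Fin n → Bool // w ⟨0, hn⟩ = a} ≃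
    {x : MShift T0 // x.1 0 = a ∧ (shift T0)^[n] x = x} where
  toFun w := ⟨bpt hn w.1, by
    constructor
    · exact (bpt_lt hn w.1 ⟨0, hn⟩).trans w.2
    · exact bpt_per hn w.1⟩
  invFun x := ⟨fun i => x.1.1 i.1, x.2.1⟩
  left_inv w := Subtype.ext (funext fun i => bpt_lt hn w.1 i)
  right_inv x := by
    apply Subtype.ext
    apply Subtype.ext
    funext k
    have hper : ∀ i, x.1.1 (i + n) = x.1.1 i := by
      intro i
      have := congrArg Subtype.val x.2.2
      have := congrFun this i
      rw [← this, shift_iter]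
    show x.1.1 (k % n) = x.1.1 k
    exact (periodic_mod x.1.1 n hper k).symm

section Pot

variable (c : Multiplicative ℤ → ℝ)

/-- the potential -/
noncomputable def pot : MShift T0 → ℝ := fun x => Real.log (c (PS (x.1 0)))

/-- weights -/
noncomputable def cw (b : Bool) : ℝ≥0∞ := ENNReal.ofReal (c (PS b))

lemma birk_bpt (hc : IsPosHom c) (n : ℕ) (hn : 0 < n) (w : Fin n → Bool) :
    Real.exp (birk T0 (pot c) n (bpt hn w)) = ∏ i : Fin n, c (PS (w i)) := by
  unfold birk
  rw [Real.exp_sum, ← Fin.prod_univ_eq_prod_range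
    (fun i => Real.exp (pot c ((shift T0)^[i] (bpt hn w)))) n]
  apply Finset.prod_congr rfl
  intro i _
  have h1 : ((shift T0)^[i.1] (bpt hn w)).1 0 = w i := by
    rw [shift_iter]
    show w _ = w i
    congr 1
    exact Fin.ext (by simp [Nat.mod_eq_of_lt i.2])
  show Real.exp (Real.log (c (PS (((shift T0)^[i.1] (bpt hn w)).1 0)))) = _
  rw [h1, Real.exp_log (hc.1 _)]

def consEquiv (a : Bool) (m : ℕ) :
    (Fin m → Bool) ≃ {w : Fin (m+1) → Bool // w ⟨0, Nat.succ_pos m⟩ = a} where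
  toFun u := ⟨Fin.cons a u, by simp⟩
  invFun w i := w.1 i.succ
  left_inv u := by funext i; simp
  right_inv w := by
    obtain ⟨wf, hwf⟩ := w
    apply Subtype.ext
    funext i
    induction i using Fin.cases with
    | zero =>
      have hw : wf 0 = a := by
        rw [← hwf]
        congr 1
      simp [hw]
    | succ j => simp

lemma zn_base (hc : IsPosHom c) (a : Bool) (m : ℕ) :
    Zn T0 (pot c) a (m + 1) = cw c a * (cw c true + cw c false) ^ m := by
  unfold Zn
  rw [← Equiv.tsum_eq (eBase a (m+1) (Nat.succ_pos m))]
  have hterm : ∀ w : {w : Fin (m+1) → Bool // w ⟨0, Nat.succ_pos m⟩ = a},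
      ENNReal.ofReal (Real.exp (birk T0 (pot c) (m+1) ((eBase a (m+1) (Nat.succ_pos m)) w).1))
        = ∏ i : Fin (m+1), cw c (w.1 i) := by
    intro w
    have h0 : ((eBase a (m+1) (Nat.succ_pos m)) w).1 = bpt (Nat.succ_pos m) w.1 := rfl
    rw [h0, birk_bpt c hc, ENNReal.ofReal_prod_of_nonneg (fun i _ => (hc.1 _).le)]
    rfl
  calc ∑' w : {w : Fin (m+1) → Bool // w ⟨0, Nat.succ_pos m⟩ = a},
        ENNReal.ofReal (Real.exp (birk T0 (pot c) (m+1)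
          ((eBase a (m+1) (Nat.succ_pos m)) w).1))
      = ∑' w : {w : Fin (m+1) → Bool // w ⟨0, Nat.succ_pos m⟩ = a},
        ∏ i : Fin (m+1), cw c (w.1 i) := tsum_congr hterm
    _ = ∑' u : Fin m → Bool, ∏ i : Fin (m+1), cw c (((consEquiv a m) u).1 i) :=
        (Equiv.tsum_eq (consEquiv a m) _).symm
    _ = cw c a * (cw c true + cw c false) ^ m := by
        have h1 : ∀ u : Fin m → Bool,
            (∏ i : Fin (m+1), cw c (((consEquiv a m) u).1 i))
              = cw c a * ∏ i : Fin m, cw c (u i) := by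
          intro u
          calc ∏ i : Fin (m+1), cw c (((consEquiv a m) u).1 i)
              = ∏ i : Fin (m+1), Fin.cons (cw c a) (fun j => cw c (u j)) i := by
                apply Finset.prod_congr rfl
                intro i _
                induction i using Fin.cases with
                | zero =>
                  show cw c ((Fin.cons a u : Fin (m+1) → Bool) 0) = _
                  simp
                | succ j =>
                  show cw c ((Fin.cons a u : Fin (m+1) → Bool) j.succ) = _
                  simp
            _ = cw c a * ∏ i : Fin m, cw c (u i) := Fin.prod_cons _ _
        rw [tsum_congr h1, tsum_fintype, ← Finset.mul_sum]
        congr 1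
        have h2 := Finset.prod_univ_sum (fun _ : Fin m => (Finset.univ : Finset Bool))
          (fun _ b => cw c b)
        rw [Fintype.piFinset_univ] at h2
        rw [← h2]
        simp [Fintype.sum_bool, Finset.prod_const]

lemma expPressure_base (hc : IsPosHom c) :
    expPressure T0 (pot c) = ENNReal.ofReal (c (PS true) + c (PS false)) := by
  have hS : 0 < c (PS true) + c (PS false) := by
    have := hc.1 (PS true); have := hc.1 (PS false); linarith
  have hg : ∀ a : Bool, gLambda T0 (pot c) a
      = ENNReal.ofReal (c (PS true) + c (PS false)) := by
    intro a
    unfold gLambda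
    rw [← Filter.limsup_nat_add (fun n : ℕ => Zn T0 (pot c) a n ^ ((n : ℝ))⁻¹) 1]
    have h1 := rlim (fun m => (c (PS a)) * (c (PS true) + c (PS false)) ^ m)
      (fun m => (m : ℝ) + 1) (fun m => by have := hc.1 (PS a); positivity) _
      (tendsto_logdiv_base _ _ (hc.1 _) hS)
    rw [Real.exp_log hS] at h1
    have h2 : Filter.Tendsto (fun m : ℕ => Zn T0 (pot c) a (m + 1) ^ (((m + 1 : ℕ) : ℝ))⁻¹)
        atTop (nhds (ENNReal.ofReal (c (PS true) + c (PS false)))) := by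
      refine h1.congr fun m => ?_
      rw [zn_base c hc a m]
      congr 1
      · unfold cw
        rw [ENNReal.ofReal_mul (hc.1 _).le, ENNReal.ofReal_pow hS.le, ENNReal.ofReal_add
          (hc.1 _).le (hc.1 _).le]
      · push_cast
        rfl
    exact h2.limsup_eq
  show (⨆ a : Bool, gLambda T0 (pot c) a) = _
  simp only [hg]
  exact iSup_const

lemma pressure_base (hc : IsPosHom c) :
    pressure T0 (pot c) = ((Real.log (c (PS true) + c (PS false)) : ℝ) : EReal) := by
  have hS : 0 < c (PS true) + c (PS false) := by
    have := hc.1 (PS true); have := hc.1 (PS false); linarith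
  rw [pressure, expPressure_base c hc, ENNReal.log_ofReal, if_neg (not_le.2 hS)]

end Pot

end Ex16

end CMS

namespace CMS

namespace Ex16

open ENNReal

abbrev GZ := Multiplicative ℤ

abbrev TE := extT T0 PS

lemma eps_true : eps true = 1 := rfl
lemma eps_false : eps false = -1 := rfl

/-- total winding of a word -/
def wsum {n : ℕ} (w : Fin n → Bool) : ℤ := ∑ i : Fin n, eps (w i)

section EPT

variable {n : ℕ} (hn : 0 < n) (w : Fin n → Bool)

/-- periodized word -/
def vv : ℕ → Bool := fun k => w ⟨k % n, Nat.mod_lt k hn⟩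

/-- partial sums -/
def QQ : ℕ → ℤ := fun j => ∑ i ∈ Finset.range j, eps (vv hn w i)

lemma vv_lt (i : Fin n) : vv hn w i.1 = w i := by
  unfold vv
  congr 1
  exact Fin.ext (Nat.mod_eq_of_lt i.2)

lemma vv_mod (k : ℕ) : vv hn w k = vv hn w (k % n) := by
  unfold vv
  congr 2
  rw [Nat.mod_mod_of_dvd _ dvd_rfl]

lemma QQ_top : QQ hn w n = wsum w := by
  unfold QQ wsum
  rw [← Fin.sum_univ_eq_sum_range (fun k => eps (vv hn w k)) n]
  exact Finset.sum_congr rfl fun i _ => by rw [vv_lt]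

lemma QQ_step (hbal : wsum w = 0) (k : ℕ) :
    QQ hn w ((k + 1) % n) = QQ hn w (k % n) + eps (vv hn w k) := by
  have hr : k % n < n := Nat.mod_lt k hn
  have hv : eps (vv hn w k) = eps (vv hn w (k % n)) := by rw [← vv_mod]
  rcases Nat.lt_or_ge 1 n with hn1 | hn1
  swap
  · exfalso
    have hn2 : n = 1 := by omega
    subst hn2
    unfold wsum at hbal
    rw [Fin.sum_univ_one] at hbal
    cases h : (w 0) <;> rw [h] at hbal <;> simp [eps] at hbal
  rcases Nat.lt_or_ge (k % n + 1) n with h | h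
  · have h1 : (k + 1) % n = k % n + 1 := by
      conv_lhs => rw [Nat.add_mod]
      rw [Nat.mod_eq_of_lt hn1, Nat.mod_eq_of_lt h]
    rw [h1, hv]
    exact Finset.sum_range_succ _ _
  · have h2 : k % n + 1 = n := by omega
    have h1 : (k + 1) % n = 0 := by
      conv_lhs => rw [Nat.add_mod]
      rw [Nat.mod_eq_of_lt hn1, h2, Nat.mod_self]
    have h4 : QQ hn w (k % n + 1) = QQ hn w n := by rw [h2]
    have h5 : QQ hn w (k % n) + eps (vv hn w (k % n)) = QQ hn w (k % n + 1) :=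
      (Finset.sum_range_succ _ _).symm
    rw [h1, hv, h5, h4, QQ_top, hbal]
    rfl

/-- the periodic point of the extension determined by a balanced word -/
def ept (hbal : wsum w = 0) (g : GZ) : MShift TE :=
  ⟨fun k => (vv hn w k, g * Multiplicative.ofAdd (QQ hn w (k % n))),
   fun k => ⟨trivial, by
    show g * Multiplicative.ofAdd (QQ hn w ((k + 1) % n))
        = g * Multiplicative.ofAdd (QQ hn w (k % n)) * PS (vv hn w k)
    rw [PS_eq, QQ_step hn w hbal k, ofAdd_add, mul_assoc]⟩⟩

lemma ept_fst (hbal : wsum w = 0) (g : GZ) (k : ℕ) :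
    ((ept hn w hbal g).1 k).1 = vv hn w k := rfl

lemma ept_snd (hbal : wsum w = 0) (g : GZ) (k : ℕ) :
    ((ept hn w hbal g).1 k).2 = g * Multiplicative.ofAdd (QQ hn w (k % n)) := rfl

lemma ept_at0 (hbal : wsum w = 0) (g : GZ) :
    (ept hn w hbal g).1 0 = (w ⟨0, hn⟩, g) := by
  show (vv hn w 0, g * Multiplicative.ofAdd (QQ hn w (0 % n))) = _
  rw [Nat.zero_mod]
  have h1 : QQ hn w 0 = 0 := rfl
  have h2 : vv hn w 0 = w ⟨0, hn⟩ := vv_lt hn w ⟨0, hn⟩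
  rw [h1, h2, ofAdd_zero, mul_one]

lemma ept_per (hbal : wsum w = 0) (g : GZ) :
    (shift TE)^[n] (ept hn w hbal g) = ept hn w hbal g := by
  apply Subtype.ext
  funext k
  rw [shift_iter]
  show (vv hn w (k + n), g * Multiplicative.ofAdd (QQ hn w ((k + n) % n)))
      = (vv hn w k, g * Multiplicative.ofAdd (QQ hn w (k % n)))
  rw [vv_mod hn w (k + n), Nat.add_mod_right, ← vv_mod]

/-- second coordinates of any admissible point -/
lemma snd_formula (x : MShift TE) (g : GZ) (h0 : (x.1 0).2 = g) (k : ℕ) :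
    (x.1 k).2 = g * Multiplicative.ofAdd (∑ i ∈ Finset.range k, eps ((x.1 i).1)) := by
  induction k with
  | zero => simpa using h0
  | succ k ih =>
    have := (x.2 k).2
    rw [this, ih, PS_eq, Finset.sum_range_succ, ofAdd_add, mul_assoc]

/-- periodic points of the extension are balanced words -/
def eExt (b : Bool) (g : GZ) (n : ℕ) (hn : 0 < n) :
    {w : Fin n → Bool // w ⟨0, hn⟩ = b ∧ wsum w = 0} ≃
    {x : MShift TE // x.1 0 = (b, g) ∧ (shift TE)^[n] x = x} where
  toFun w := ⟨ept hn w.1 w.2.2 g, by rw [ept_at0, w.2.1], ept_per hn w.1 w.2.2 g⟩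
  invFun x := ⟨fun i => (x.1.1 i.1).1, by
    have hper : ∀ i, x.1.1 (i + n) = x.1.1 i := by
      intro i
      have h := congrFun (congrArg Subtype.val x.2.2) i
      rw [← h, shift_iter]
    have hsum : ∀ j : ℕ, (∑ i ∈ Finset.range j, eps ((fun i : Fin n => (x.1.1 i.1).1)
        ⟨i % n, Nat.mod_lt i hn⟩)) = ∑ i ∈ Finset.range j, eps ((x.1.1 i).1) := by
      intro j
      apply Finset.sum_congr rfl
      intro i _
      congr 2
      exact congrArg Prod.fst (periodic_mod x.1.1 n hper i).symm
    constructor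
    · show (x.1.1 0).1 = b
      rw [x.2.1]
    · show wsum (fun i : Fin n => (x.1.1 i.1).1) = 0
      have h2 : (x.1.1 n).2 = (x.1.1 0).2 := by
        have := hper 0
        rw [Nat.zero_add] at this
        rw [this]
      have h0 : (x.1.1 0).2 = (b, g).2 := by rw [x.2.1]
      have h3 := snd_formula x.1 g h0 n
      rw [h2, x.2.1] at h3
      have h4 : Multiplicative.ofAdd (∑ i ∈ Finset.range n, eps ((x.1.1 i).1))
          = Multiplicative.ofAdd (0 : ℤ) := by
        rw [ofAdd_zero]
        exact (mul_left_cancel (a := g) (by rw [mul_one, ← h3])).symm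
      have h5 := Multiplicative.ofAdd.injective h4
      rw [← QQ_top hn, QQ]
      show (∑ i ∈ Finset.range n, eps (vv hn (fun i : Fin n => (x.1.1 i.1).1) i)) = 0
      rw [show (fun i : ℕ => eps (vv hn (fun i : Fin n => (x.1.1 i.1).1) i))
          = fun i : ℕ => eps ((fun i : Fin n => (x.1.1 i.1).1) ⟨i % n, Nat.mod_lt i hn⟩)
          from rfl]
      rw [hsum n]
      exact h5⟩
  left_inv w := by
    apply Subtype.ext
    funext i
    show vv hn w.1 i.1 = w.1 i
    exact vv_lt hn w.1 i
  right_inv x := by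
    apply Subtype.ext
    apply Subtype.ext
    funext k
    have hper : ∀ i, x.1.1 (i + n) = x.1.1 i := by
      intro i
      have h := congrFun (congrArg Subtype.val x.2.2) i
      rw [← h, shift_iter]
    have hvvx : ∀ i : ℕ, vv hn (fun i : Fin n => (x.1.1 i.1).1) i = (x.1.1 i).1 := by
      intro i
      show (x.1.1 (i % n)).1 = (x.1.1 i).1
      exact congrArg Prod.fst (periodic_mod x.1.1 n hper i).symm
    have h0 : (x.1.1 0).2 = (b, g).2 := by rw [x.2.1]
    apply Prod.ext
    · rw [ept_fst]
      exact hvvx k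
    · rw [ept_snd]
      have h1 : (x.1.1 k).2 = (x.1.1 (k % n)).2 :=
        congrArg Prod.snd (periodic_mod x.1.1 n hper k)
      rw [h1, snd_formula x.1 g h0 (k % n)]
      congr 2
      apply Finset.sum_congr rfl
      intro i _
      rw [hvvx i]

end EPT

section ExtPot

variable (c : Multiplicative ℤ → ℝ)

lemma posHom_map_one (hc : IsPosHom c) : c 1 = 1 := by
  have h := hc.2 1 1
  rw [mul_one] at h
  have h1 := hc.1 1
  nlinarith

/-- `c` as a monoid hom into `(ℝ, *)`. -/
def chom (hc : IsPosHom c) : Multiplicative ℤ →* ℝ where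
  toFun := c
  map_one' := posHom_map_one c hc
  map_mul' := hc.2

lemma birk_ept (hc : IsPosHom c) {n : ℕ} (hn : 0 < n) (w : Fin n → Bool)
    (hbal : wsum w = 0) (g : GZ) :
    Real.exp (birk TE (liftPot T0 PS (pot c)) n (ept hn w hbal g)) = 1 := by
  unfold birk
  rw [Real.exp_sum]
  have hterm : ∀ i ∈ Finset.range n,
      Real.exp (liftPot T0 PS (pot c) ((shift TE)^[i] (ept hn w hbal g)))
        = c (PS (vv hn w i)) := by
    intro i _
    show Real.exp (Real.log (c (PS ((((shift TE)^[i] (ept hn w hbal g)).1 0).1)))) = _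
    rw [shift_iter, Nat.zero_add, ept_fst, Real.exp_log (hc.1 _)]
  rw [Finset.prod_congr rfl hterm]
  have h1 : ∀ i ∈ Finset.range n, c (PS (vv hn w i))
      = (chom c hc) (Multiplicative.ofAdd (eps (vv hn w i))) := fun i _ => rfl
  rw [Finset.prod_congr rfl h1, ← map_prod, ← ofAdd_sum]
  have h2 : (∑ i ∈ Finset.range n, eps (vv hn w i)) = 0 := by
    show QQ hn w n = 0
    rw [QQ_top, hbal]
  rw [h2, ofAdd_zero, map_one]

lemma zn_ext (hc : IsPosHom c) (b : Bool) (g : GZ) (n : ℕ) (hn : 0 < n) :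
    Zn TE (liftPot T0 PS (pot c)) (b, g) n
      = (Fintype.card {w : Fin n → Bool // w ⟨0, hn⟩ = b ∧ wsum w = 0} : ℝ≥0∞) := by
  unfold Zn
  rw [← Equiv.tsum_eq (eExt b g n hn)]
  have hterm : ∀ w : {w : Fin n → Bool // w ⟨0, hn⟩ = b ∧ wsum w = 0},
      ENNReal.ofReal (Real.exp (birk TE (liftPot T0 PS (pot c)) n
        ((eExt b g n hn w) : {x : MShift TE // x.1 0 = (b, g) ∧ (shift TE)^[n] x = x}).1))
        = 1 := by
    intro w
    have h0 : ((eExt b g n hn w) : {x : MShift TE // x.1 0 = (b, g)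
        ∧ (shift TE)^[n] x = x}).1 = ept hn w.1 w.2.2 g := rfl
    rw [h0, birk_ept c hc]
    simp
  rw [tsum_congr hterm, tsum_fintype]
  simp

end ExtPot

end Ex16

end CMS

namespace CMS

namespace Ex16

open ENNReal

lemma sum_eps_cons {N : ℕ} (b : Bool) (f : Fin N → Bool) :
    wsum (Fin.cons b f : Fin (N+1) → Bool) = eps b + ∑ i : Fin N, eps (f i) := by
  have h1 : ∀ i : Fin (N+1), eps ((Fin.cons b f : Fin (N+1) → Bool) i)
      = Fin.cons (α := fun _ : Fin (N+1) => ℤ) (eps b) (fun j => eps (f j)) i := by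
    intro i
    induction i using Fin.cases with
    | zero => simp
    | succ j => simp
  unfold wsum
  rw [Finset.sum_congr rfl fun i _ => h1 i]
  exact Fin.sum_cons _ _

lemma sum_eps_ite {N : ℕ} (s : Finset (Fin N)) :
    (∑ i : Fin N, eps (if i ∈ s then true else false)) = 2 * s.card - N := by
  have h : ∀ i : Fin N, eps (if i ∈ s then true else false)
      = 2 * (if i ∈ s then (1:ℤ) else 0) - 1 := by
    intro i
    split <;> simp [eps]
  rw [Finset.sum_congr rfl fun i _ => h i, Finset.sum_sub_distrib, ← Finset.mul_sum,
    Finset.sum_ite_mem, Finset.univ_inter, Finset.sum_const, Finset.sum_const,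
    Finset.card_univ, Fintype.card_fin]
  simp [nsmul_eq_mul]

lemma card_lower (m : ℕ) :
    (2*m+1).choose m ≤ Fintype.card {w : Fin (2*m+2) → Bool //
      w ⟨0, by omega⟩ = true ∧ wsum w = 0} := by
  have hcard : Fintype.card {s : Finset (Fin (2*m+1)) // s.card = m} = (2*m+1).choose m := by
    rw [Fintype.card_finset_len, Fintype.card_fin]
  rw [← hcard]
  let F : {s : Finset (Fin (2*m+1)) // s.card = m} →
      {w : Fin (2*m+2) → Bool // w ⟨0, by omega⟩ = true ∧ wsum w = 0} := fun s =>
    ⟨Fin.cons true (fun i => if i ∈ s.1 then true else false), by simp, by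
      rw [sum_eps_cons, sum_eps_ite, s.2, eps_true]
      push_cast
      omega⟩
  have hinj : Function.Injective F := by
    intro s1 s2 h
    apply Subtype.ext
    ext i
    have h1 : (if i ∈ s1.1 then true else false) = (if i ∈ s2.1 then true else false) := by
      have h0 := congrFun (congrArg Subtype.val h) i.succ
      simpa [F] using h0
    by_cases h2 : i ∈ s1.1 <;> by_cases h3 : i ∈ s2.1 <;>
      simp [h2, h3] at h1 ⊢
  exact Fintype.card_le_of_injective F hinj

lemma nat_ineq (m : ℕ) : 4^(m+1) ≤ (4*m+6) * ((2*m+1).choose m) := by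
  have h1 := Nat.four_pow_le_two_mul_add_one_mul_central_binom (m+1)
  have h2 : (2*(m+1)).choose (m+1) = 2 * ((2*m+1).choose m) := by
    have heq : 2*(m+1) = (2*m+1)+1 := by ring
    rw [heq, Nat.choose_succ_succ (2*m+1) m, Nat.choose_symm_half]
    ring
  rw [h2] at h1
  calc 4^(m+1) ≤ (2*(m+1)+1) * (2 * ((2*m+1).choose m)) := h1
    _ = (4*m+6) * ((2*m+1).choose m) := by ring

lemma nat_ineq' (m : ℕ) : 4^(m+1) ≤ (6*(m+1)) * ((2*m+1).choose m) :=
  le_trans (nat_ineq m) (Nat.mul_le_mul_right _ (by omega))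

section ExtPressure

variable (c : Multiplicative ℤ → ℝ)

lemma zn_ext_lower (hc : IsPosHom c) (m : ℕ) :
    (((2*m+1).choose m : ℕ) : ℝ≥0∞)
      ≤ Zn TE (liftPot T0 PS (pot c)) (true, (1:GZ)) (2*m+2) := by
  rw [zn_ext c hc true 1 (2*m+2) (by omega)]
  exact_mod_cast card_lower m

lemma zn_ext_upper (hc : IsPosHom c) (a : Bool × GZ) (n : ℕ) (hn : 0 < n) :
    Zn TE (liftPot T0 PS (pot c)) a n ≤ 2^n := by
  obtain ⟨b, g⟩ := a
  rw [zn_ext c hc b g n hn]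
  calc (Fintype.card {w : Fin n → Bool // w ⟨0, hn⟩ = b ∧ wsum w = 0} : ℝ≥0∞)
      ≤ (Fintype.card (Fin n → Bool) : ℝ≥0∞) := Nat.cast_le.2 (Fintype.card_subtype_le _)
    _ = 2^n := by
        rw [Fintype.card_fun, Fintype.card_fin, Fintype.card_bool]
        push_cast
        rfl

lemma glambda_ext_le (hc : IsPosHom c) (a : Bool × GZ) :
    gLambda TE (liftPot T0 PS (pot c)) a ≤ 2 := by
  apply Filter.limsup_le_of_le (by isBoundedDefault)
  filter_upwards [Filter.eventually_ge_atTop 1] with n hn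
  calc Zn TE (liftPot T0 PS (pot c)) a n ^ ((n:ℝ))⁻¹
      ≤ ((2:ℝ≥0∞)^n) ^ ((n:ℝ))⁻¹ :=
        ENNReal.rpow_le_rpow (zn_ext_upper c hc a n hn) (by positivity)
    _ = 2 := by
        rw [← ENNReal.rpow_natCast 2 n, ← ENNReal.rpow_mul,
          mul_inv_cancel₀ (Nat.cast_ne_zero.2 (by omega) : (n:ℝ) ≠ 0),
          ENNReal.rpow_one]

lemma ofReal_le_zn (hc : IsPosHom c) (K : ℕ) :
    ENNReal.ofReal ((4:ℝ)^(K+1)/(4*(K:ℝ)+6))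
      ≤ Zn TE (liftPot T0 PS (pot c)) (true, (1:GZ)) (2*K+2) := by
  refine le_trans ?_ (zn_ext_lower c hc K)
  rw [← ENNReal.ofReal_natCast]
  apply ENNReal.ofReal_le_ofReal
  rw [div_le_iff₀ (by positivity)]
  have h := nat_ineq K
  have h2 : ((4^(K+1) : ℕ) : ℝ) ≤ (((4*K+6) * ((2*K+1).choose K) : ℕ) : ℝ) := Nat.cast_le.2 h
  push_cast at h2
  nlinarith [h2]

lemma ext_tendsto :
    Filter.Tendsto (fun m : ℕ => ENNReal.ofReal ((4:ℝ)^(m+1)/(4*(m:ℝ)+6))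
      ^ (2*(m:ℝ)+2)⁻¹) atTop (nhds 2) := by
  have h := rlim (fun m => (4:ℝ)^(m+1)/(4*(m:ℝ)+6)) (fun m => 2*(m:ℝ)+2)
    (fun m => by positivity) _ tendsto_logdiv_ext
  rw [Real.exp_log (by norm_num : (0:ℝ) < 2)] at h
  simpa using h

lemma glambda_ext_ge (hc : IsPosHom c) :
    (2:ℝ≥0∞) ≤ gLambda TE (liftPot T0 PS (pot c)) (true, (1:GZ)) := by
  by_contra hlt
  push_neg at hlt
  obtain ⟨cc, h1, h2⟩ := exists_between hlt
  have hfreq : ∃ᶠ n in Filter.atTop,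
      cc ≤ Zn TE (liftPot T0 PS (pot c)) (true, (1:GZ)) n ^ ((n:ℝ))⁻¹ := by
    rw [Filter.frequently_atTop]
    intro N
    have hev := ext_tendsto.eventually (lt_mem_nhds h2)
    obtain ⟨M, hM⟩ := Filter.eventually_atTop.1 hev
    refine ⟨2*(max N M)+2, by omega, ?_⟩
    set K := max N M with hK
    have hexp : (((2*K+2 : ℕ)):ℝ)⁻¹ = (2*(K:ℝ)+2)⁻¹ := by push_cast; ring_nf
    calc cc ≤ ENNReal.ofReal ((4:ℝ)^(K+1)/(4*(K:ℝ)+6)) ^ (2*(K:ℝ)+2)⁻¹ :=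
          (hM K (le_max_right N M)).le
      _ ≤ Zn TE (liftPot T0 PS (pot c)) (true, (1:GZ)) (2*K+2) ^ (2*(K:ℝ)+2)⁻¹ :=
          ENNReal.rpow_le_rpow (ofReal_le_zn c hc K) (by positivity)
      _ = Zn TE (liftPot T0 PS (pot c)) (true, (1:GZ)) (2*K+2) ^ (((2*K+2 : ℕ)):ℝ)⁻¹ := by
          rw [hexp]
  have := Filter.le_limsup_of_frequently_le hfreq (by isBoundedDefault)
  exact absurd this (not_le.2 h1)

lemma expPressure_ext (hc : IsPosHom c) :
    expPressure TE (liftPot T0 PS (pot c)) = 2 := by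
  apply le_antisymm
  · exact iSup_le (glambda_ext_le c hc)
  · exact le_iSup_of_le (true, (1:GZ)) (glambda_ext_ge c hc)

lemma pressure_ext (hc : IsPosHom c) :
    pressure TE (liftPot T0 PS (pot c)) = ((Real.log 2 : ℝ) : EReal) := by
  rw [pressure, expPressure_ext c hc]
  have h2 : (2:ℝ≥0∞) = ENNReal.ofReal 2 := by norm_num
  rw [h2, ENNReal.log_ofReal, if_neg (by norm_num)]

lemma term_lower (m : ℕ) (X : ℝ≥0∞) (k : ℕ) (hk : (k:ℝ≥0∞) ≤ X)
    (h : 4^(m+1) ≤ 6*(m+1)*k) :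
    6⁻¹ * ((m:ℝ≥0∞)+1)⁻¹ ≤ (2:ℝ≥0∞)⁻¹ ^ (2*m+2) * X := by
  have hpow2 : (2:ℝ≥0∞)⁻¹ ^ (2*m+2) = ((4:ℝ≥0∞)^(m+1))⁻¹ := by
    rw [← ENNReal.inv_pow]
    congr 1
    rw [show 2*m+2 = 2*(m+1) by ring, pow_mul]
    norm_num
  rw [hpow2]
  have h6 : (6*((m:ℝ≥0∞)+1)) ≠ 0 := by
    simp
  have h6' : (6*((m:ℝ≥0∞)+1)) ≠ ∞ := by
    refine ENNReal.mul_ne_top (by norm_num) ?_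
    exact ENNReal.add_ne_top.2 ⟨ENNReal.natCast_ne_top m, by norm_num⟩
  have h4ne : ((4:ℝ≥0∞)^(m+1)) ≠ 0 := by positivity
  have h4ne' : ((4:ℝ≥0∞)^(m+1)) ≠ ∞ := by
    exact ENNReal.pow_ne_top (by norm_num)
  have h3 : (4:ℝ≥0∞)^(m+1) ≤ (6*((m:ℝ≥0∞)+1)) * X := by
    calc (4:ℝ≥0∞)^(m+1) = ((4^(m+1) : ℕ) : ℝ≥0∞) := by push_cast; rfl
      _ ≤ ((6*(m+1)*k : ℕ) : ℝ≥0∞) := Nat.cast_le.2 h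
      _ = (6*((m:ℝ≥0∞)+1)) * (k:ℝ≥0∞) := by push_cast; ring
      _ ≤ _ := mul_le_mul_right hk _
  have hL : (6:ℝ≥0∞)⁻¹ * ((m:ℝ≥0∞)+1)⁻¹ = (6*((m:ℝ≥0∞)+1))⁻¹ :=
    (ENNReal.mul_inv (Or.inl (by norm_num)) (Or.inl (by norm_num))).symm
  rw [hL]
  have hX4 : ((4:ℝ≥0∞)^(m+1))⁻¹ * X = X / ((4:ℝ≥0∞)^(m+1)) := by
    rw [ENNReal.div_eq_inv_mul]
  rw [hX4, ENNReal.le_div_iff_mul_le (Or.inl h4ne) (Or.inl h4ne')]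
  calc (6*((m:ℝ≥0∞)+1))⁻¹ * (4:ℝ≥0∞)^(m+1)
      ≤ (6*((m:ℝ≥0∞)+1))⁻¹ * ((6*((m:ℝ≥0∞)+1)) * X) := mul_le_mul_right h3 _
    _ = X := by rw [← mul_assoc, ENNReal.inv_mul_cancel h6 h6', one_mul]

lemma rec_sum (hc : IsPosHom c) :
    ∑' n : ℕ, (2:ℝ≥0∞)⁻¹ ^ (n+1) * Zn TE (liftPot T0 PS (pot c)) (true,(1:GZ)) (n+1)
      = ∞ := by
  set g : ℕ → ℝ≥0∞ :=
    fun n => (2:ℝ≥0∞)⁻¹ ^ (n+1) * Zn TE (liftPot T0 PS (pot c)) (true,(1:GZ)) (n+1) with hg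
  have hinj : Function.Injective (fun m : ℕ => 2*m+1) := by
    intro a b h
    dsimp only at h
    omega
  have hcomp := ENNReal.tsum_comp_le_tsum_of_injective hinj g
  have hlow : ∀ m : ℕ, 6⁻¹ * ((m:ℝ≥0∞)+1)⁻¹ ≤ g (2*m+1) := by
    intro m
    have hidx : 2*m+1+1 = 2*m+2 := by ring
    show 6⁻¹ * ((m:ℝ≥0∞)+1)⁻¹ ≤ (2:ℝ≥0∞)⁻¹ ^ (2*m+1+1)
      * Zn TE (liftPot T0 PS (pot c)) (true,(1:GZ)) (2*m+1+1)
    rw [hidx]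
    exact term_lower m _ ((2*m+1).choose m) (zn_ext_lower c hc m) (nat_ineq' m)
  have h1 : ∑' m, g (2*m+1) = ∞ :=
    tsum_eq_top_of_harmonic_le _ 6⁻¹ (by norm_num) hlow
  exact top_le_iff.1 (h1 ▸ hcomp)

end ExtPressure

end Ex16

end CMS

namespace CMS

namespace Ex16

open ENNReal

lemma dyck_prefix (l : List DyckStep) (k : ℕ) (hk : k ≤ l.length) :
    (∑ i ∈ Finset.range k, eps (l.getD i DyckStep.D == DyckStep.U))
      = ((l.take k).count DyckStep.U : ℤ) - ((l.take k).count DyckStep.D : ℤ) := by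
  induction k with
  | zero => simp
  | succ k ih =>
    have hk' : k < l.length := by omega
    rw [Finset.sum_range_succ, ih (by omega), ← List.take_concat_get' l k hk',
      List.count_append, List.count_append]
    have hget : l.getD k DyckStep.D = l[k] := List.getD_eq_getElem l DyckStep.D hk'
    rcases (l[k]'hk').dichotomy with h | h <;> rw [hget, h] <;>
      simp [eps] <;> push_cast <;> ring

/-- the word associated with a Dyck word -/
def dwd (m : ℕ) (d : DyckWord) : Fin (2*m+2) → Bool :=
  fun j => if j.1 = 0 then true else if j.1 = 2*m+1 then false
    else (d.toList.getD (j.1 - 1) DyckStep.D == DyckStep.U)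

lemma dwd_zero (m : ℕ) (d : DyckWord) (h : 0 < 2*m+2) : dwd m d ⟨0, h⟩ = true := rfl

lemma dwd_last (m : ℕ) (d : DyckWord) (h : 2*m+1 < 2*m+2) : dwd m d ⟨2*m+1, h⟩ = false := by
  show (if 2*m+1 = 0 then true else if 2*m+1 = 2*m+1 then false
    else (d.toList.getD (2*m+1 - 1) DyckStep.D == DyckStep.U)) = false
  rw [if_neg (by omega), if_pos rfl]

lemma dwd_mid (m : ℕ) (d : DyckWord) (i : ℕ) (h1 : 1 ≤ i) (h2 : i ≤ 2*m)
    (h : i < 2*m+2) :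
    dwd m d ⟨i, h⟩ = (d.toList.getD (i - 1) DyckStep.D == DyckStep.U) := by
  show (if i = 0 then true else if i = 2*m+1 then false
    else (d.toList.getD (i - 1) DyckStep.D == DyckStep.U)) = _
  rw [if_neg (by omega), if_neg (by omega)]

section DwdFacts

variable (m : ℕ) (d : DyckWord)

lemma dlen (hd : d.semilength = m) : d.toList.length = 2*m := by
  rw [← d.two_mul_semilength_eq_length, hd]

lemma QQ_dwd (hd : d.semilength = m) (k : ℕ) (hk1 : 1 ≤ k) (hk2 : k ≤ 2*m+1) :
    QQ (by omega : 0 < 2*m+2) (dwd m d) k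
      = 1 + (((d.toList.take (k-1)).count DyckStep.U : ℤ)
        - ((d.toList.take (k-1)).count DyckStep.D : ℤ)) := by
  have hn : 0 < 2*m+2 := by omega
  obtain ⟨j, rfl⟩ : ∃ j, k = j + 1 := ⟨k - 1, by omega⟩
  show (∑ i ∈ Finset.range (j+1), eps (vv hn (dwd m d) i)) = _
  rw [Finset.sum_range_succ']
  have h0 : eps (vv hn (dwd m d) 0) = 1 := by
    rw [show (0:ℕ) = ((⟨0, hn⟩ : Fin (2*m+2)) : ℕ) from rfl, vv_lt, dwd_zero]
    rfl
  have hmid : ∀ i ∈ Finset.range j, eps (vv hn (dwd m d) (i+1))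
      = eps (d.toList.getD i DyckStep.D == DyckStep.U) := by
    intro i hi
    have hilt : i < j := Finset.mem_range.1 hi
    have hi2 : i + 1 < 2*m+2 := by omega
    rw [show (i+1 : ℕ) = ((⟨i+1, hi2⟩ : Fin (2*m+2)) : ℕ) from rfl, vv_lt,
      dwd_mid m d (i+1) (by omega) (by omega) hi2]
    simp
  rw [Finset.sum_congr rfl hmid, h0, dyck_prefix d.toList j (by rw [dlen m d hd]; omega)]
  have : j + 1 - 1 = j := by omega
  rw [this]
  ring

lemma QQ_dwd_pos (hd : d.semilength = m) (k : ℕ) (hk1 : 1 ≤ k) (hk2 : k ≤ 2*m+1) :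
    0 < QQ (by omega : 0 < 2*m+2) (dwd m d) k := by
  rw [QQ_dwd m d hd k hk1 hk2]
  have := d.count_D_le_count_U (k-1)
  omega

lemma wsum_dwd (hd : d.semilength = m) : wsum (dwd m d) = 0 := by
  have hn : 0 < 2*m+2 := by omega
  rw [← QQ_top hn (dwd m d)]
  show (∑ i ∈ Finset.range (2*m+1+1), eps (vv hn (dwd m d) i)) = 0
  rw [Finset.sum_range_succ]
  have h1 : (∑ i ∈ Finset.range (2*m+1), eps (vv hn (dwd m d) i)) = 1 := by
    show QQ hn (dwd m d) (2*m+1) = 1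
    rw [QQ_dwd m d hd (2*m+1) (by omega) le_rfl]
    have hfull : d.toList.take (2*m+1-1) = d.toList := by
      apply List.take_of_length_le
      rw [dlen m d hd]
      omega
    rw [hfull, d.count_U_eq_count_D]
    ring
  have h2 : eps (vv hn (dwd m d) (2*m+1)) = -1 := by
    rw [show (2*m+1 : ℕ) = ((⟨2*m+1, by omega⟩ : Fin (2*m+2)) : ℕ) from rfl, vv_lt,
      dwd_last]
    rfl
  rw [h1, h2]
  ring

end DwdFacts

lemma znstar_lower (c : Multiplicative ℤ → ℝ) (hc : IsPosHom c) (m : ℕ) :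
    ((catalan m : ℕ) : ℝ≥0∞)
      ≤ Znstar TE (liftPot T0 PS (pot c)) (true,(1:GZ)) (2*m+2) := by
  classical
  rw [← DyckWord.card_dyckWord_semilength_eq_catalan]
  have hn : 0 < 2*m+2 := by omega
  let F : {p : DyckWord // p.semilength = m} →
      {x : MShift TE // x.1 0 = (true,(1:GZ)) ∧ (shift TE)^[2*m+2] x = x ∧
        ∀ k, 0 < k → k < 2*m+2 → x.1 k ≠ (true,(1:GZ))} := fun d =>
    ⟨ept hn (dwd m d.1) (wsum_dwd m d.1 d.2) 1,
     by rw [ept_at0, dwd_zero],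
     ept_per hn (dwd m d.1) (wsum_dwd m d.1 d.2) 1,
     by
      intro k hk0 hkn heq
      have h2 := congrArg Prod.snd heq
      rw [ept_snd, one_mul, Nat.mod_eq_of_lt hkn] at h2
      have h3 : QQ hn (dwd m d.1) k = 0 := by
        have h2' : Multiplicative.ofAdd (QQ hn (dwd m d.1) k)
            = Multiplicative.ofAdd (0:ℤ) := by
          rw [ofAdd_zero]
          exact h2
        exact Multiplicative.ofAdd.injective h2'
      have h4 := QQ_dwd_pos m d.1 d.2 k (by omega) (by omega)
      omega⟩
  have hF : Function.Injective F := by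
    intro d1 d2 h
    have hw : ∀ j : Fin (2*m+2), dwd m d1.1 j = dwd m d2.1 j := by
      intro j
      have h1 := congrFun (congrArg Subtype.val (congrArg Subtype.val h)) j.1
      have h2 := congrArg Prod.fst h1
      rw [ept_fst, ept_fst, vv_lt, vv_lt] at h2
      exact h2
    apply Subtype.ext
    apply DyckWord.ext
    apply List.ext_getElem (by rw [dlen m d1.1 d1.2, dlen m d2.1 d2.2])
    intro i hi1 hi2
    have hi : i < 2*m := by rw [← dlen m d1.1 d1.2]; exact hi1
    have hj := hw ⟨i+1, by omega⟩
    rw [dwd_mid m d1.1 (i+1) (by omega) (by omega) (by omega),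
      dwd_mid m d2.1 (i+1) (by omega) (by omega) (by omega)] at hj
    have hs : i + 1 - 1 = i := by omega
    rw [hs] at hj
    have hg1 : d1.1.toList.getD i DyckStep.D = d1.1.toList[i] :=
      List.getD_eq_getElem _ _ hi1
    have hg2 : d2.1.toList.getD i DyckStep.D = d2.1.toList[i] :=
      List.getD_eq_getElem _ _ hi2
    rw [hg1, hg2] at hj
    rcases (d1.1.toList[i]'hi1).dichotomy with h1 | h1 <;>
      rcases (d2.1.toList[i]'hi2).dichotomy with h2 | h2 <;>
      rw [h1, h2] <;> rw [h1, h2] at hj <;> simp_all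
  have hsum := ENNReal.tsum_comp_le_tsum_of_injective hF
    (fun x : {x : MShift TE // x.1 0 = (true,(1:GZ)) ∧ (shift TE)^[2*m+2] x = x ∧
        ∀ k, 0 < k → k < 2*m+2 → x.1 k ≠ (true,(1:GZ))} =>
      ENNReal.ofReal (Real.exp (birk TE (liftPot T0 PS (pot c)) (2*m+2) x.1)))
  have hone : ∀ d : {p : DyckWord // p.semilength = m},
      ENNReal.ofReal (Real.exp (birk TE (liftPot T0 PS (pot c)) (2*m+2) (F d).1)) = 1 := by
    intro d
    have h0 : (F d).1 = ept hn (dwd m d.1) (wsum_dwd m d.1 d.2) 1 := rfl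
    rw [h0, birk_ept c hc]
    simp
  calc (Fintype.card {p : DyckWord // p.semilength = m} : ℝ≥0∞)
      = ∑' d : {p : DyckWord // p.semilength = m},
        ENNReal.ofReal (Real.exp (birk TE (liftPot T0 PS (pot c)) (2*m+2) (F d).1)) := by
        rw [tsum_congr hone, tsum_fintype]
        simp
    _ ≤ Znstar TE (liftPot T0 PS (pot c)) (true,(1:GZ)) (2*m+2) := hsum

end Ex16

end CMS

namespace CMS

namespace Ex16

open ENNReal

lemma nat_ineq2 (m : ℕ) : 4^(m+1) ≤ (6*(m+1)) * ((2*m+2) * catalan m) := by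
  have h1 := Nat.four_pow_le_two_mul_add_one_mul_central_binom m
  have h2 := succ_mul_catalan_eq_centralBinom m
  have h3 : Nat.centralBinom m = (2*m).choose m := rfl
  calc 4^(m+1) = 4 * 4^m := by ring
    _ ≤ 4 * ((2*m+1) * ((m+1) * catalan m)) := by
        rw [h2, h3]
        exact Nat.mul_le_mul_left 4 h1
    _ ≤ (6*(m+1)) * ((2*m+2) * catalan m) := by nlinarith [Nat.zero_le (catalan m)]

lemma nullrec_sum (c : Multiplicative ℤ → ℝ) (hc : IsPosHom c) :
    ∑' n : ℕ, ((n : ℝ≥0∞) + 1) * (2:ℝ≥0∞)⁻¹ ^ (n+1)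
      * Znstar TE (liftPot T0 PS (pot c)) (true,(1:GZ)) (n+1) = ∞ := by
  set g : ℕ → ℝ≥0∞ := fun n => ((n : ℝ≥0∞) + 1) * (2:ℝ≥0∞)⁻¹ ^ (n+1)
    * Znstar TE (liftPot T0 PS (pot c)) (true,(1:GZ)) (n+1) with hg
  have hinj : Function.Injective (fun m : ℕ => 2*m+1) := by
    intro a b h
    dsimp only at h
    omega
  have hcomp := ENNReal.tsum_comp_le_tsum_of_injective hinj g
  have hlow : ∀ m : ℕ, 6⁻¹ * ((m:ℝ≥0∞)+1)⁻¹ ≤ g (2*m+1) := by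
    intro m
    have hidx : 2*m+1+1 = 2*m+2 := by ring
    show 6⁻¹ * ((m:ℝ≥0∞)+1)⁻¹ ≤ (((2*m+1 : ℕ) : ℝ≥0∞) + 1) * (2:ℝ≥0∞)⁻¹ ^ (2*m+1+1)
      * Znstar TE (liftPot T0 PS (pot c)) (true,(1:GZ)) (2*m+1+1)
    rw [hidx]
    have hk : (((2*m+2) * catalan m : ℕ) : ℝ≥0∞)
        ≤ (((2*m+1 : ℕ) : ℝ≥0∞) + 1)
          * Znstar TE (liftPot T0 PS (pot c)) (true,(1:GZ)) (2*m+2) := by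
      have hcast : (((2*m+1 : ℕ) : ℝ≥0∞) + 1) = (((2*m+2 : ℕ)) : ℝ≥0∞) := by
        push_cast
        ring
      rw [hcast]
      push_cast
      calc (2*(m:ℝ≥0∞)+2) * ((catalan m : ℕ) : ℝ≥0∞)
          ≤ (2*(m:ℝ≥0∞)+2) * Znstar TE (liftPot T0 PS (pot c)) (true,(1:GZ)) (2*m+2) :=
            mul_le_mul_right (znstar_lower c hc m) _
        _ = _ := by push_cast; ring
    have hterm := term_lower m ((((2*m+1 : ℕ) : ℝ≥0∞) + 1)
      * Znstar TE (liftPot T0 PS (pot c)) (true,(1:GZ)) (2*m+2)) ((2*m+2) * catalan m)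
      hk (nat_ineq2 m)
    calc 6⁻¹ * ((m:ℝ≥0∞)+1)⁻¹
        ≤ (2:ℝ≥0∞)⁻¹ ^ (2*m+2) * ((((2*m+1 : ℕ) : ℝ≥0∞) + 1)
          * Znstar TE (liftPot T0 PS (pot c)) (true,(1:GZ)) (2*m+2)) := hterm
      _ = (((2*m+1 : ℕ) : ℝ≥0∞) + 1) * (2:ℝ≥0∞)⁻¹ ^ (2*m+2)
          * Znstar TE (liftPot T0 PS (pot c)) (true,(1:GZ)) (2*m+2) := by ring
  have h1 : ∑' m, g (2*m+1) = ∞ :=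
    tsum_eq_top_of_harmonic_le _ 6⁻¹ (by norm_num) hlow
  exact top_le_iff.1 (h1 ▸ hcomp)

section Arith

variable (c : Multiplicative ℤ → ℝ)

lemma PS_mul : PS true * PS false = 1 := by
  show Multiplicative.ofAdd (1:ℤ) * Multiplicative.ofAdd (-1:ℤ) = 1
  rw [← ofAdd_add]
  norm_num

lemma pq_one (hc : IsPosHom c) : c (PS true) * c (PS false) = 1 := by
  rw [← hc.2, PS_mul, posHom_map_one c hc]

lemma two_le_pq (hc : IsPosHom c) : 2 ≤ c (PS true) + c (PS false) := by
  have hp := hc.1 (PS true)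
  have hq := hc.1 (PS false)
  have h := pq_one c hc
  nlinarith [sq_nonneg (c (PS true) - 1), sq_nonneg (c (PS true) - c (PS false))]

lemma log_le (hc : IsPosHom c) :
    Real.log 2 ≤ Real.log (c (PS true) + c (PS false)) :=
  Real.log_le_log (by norm_num) (two_le_pq c hc)

lemma log_iff (hc : IsPosHom c) :
    Real.log 2 = Real.log (c (PS true) + c (PS false)) ↔ ∀ g, c g = 1 := by
  have hp := hc.1 (PS true)
  have hq := hc.1 (PS false)
  have hpq := pq_one c hc
  constructor
  · intro h
    have hsum : (2:ℝ) = c (PS true) + c (PS false) := by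
      have h1 := congrArg Real.exp h
      rwa [Real.exp_log (by norm_num), Real.exp_log (by linarith)] at h1
    have h2a : (c (PS true) - 1)^2 ≤ 0 := by nlinarith
    have h2 : (c (PS true) - 1)^2 = 0 := le_antisymm h2a (sq_nonneg _)
    have hp1 : c (PS true) = 1 := by
      have h3 : c (PS true) - 1 = 0 := by
        exact pow_eq_zero_iff (two_ne_zero) |>.1 h2
      linarith
    have hq1 : c (PS false) = 1 := by linarith
    intro g
    have hz : ∀ z : ℤ, c (Multiplicative.ofAdd z) = 1 := by
      intro z
      induction z using Int.induction_on with
      | zero =>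
        show c (Multiplicative.ofAdd (0:ℤ)) = 1
        rw [ofAdd_zero, posHom_map_one c hc]
      | succ k ih =>
        have he : Multiplicative.ofAdd ((k:ℤ)+1)
            = Multiplicative.ofAdd (k:ℤ) * Multiplicative.ofAdd (1:ℤ) := by
          rw [← ofAdd_add]
        rw [he, hc.2, ih, one_mul]
        exact hp1
      | pred k ih =>
        have he : Multiplicative.ofAdd (-(k:ℤ)-1)
            = Multiplicative.ofAdd (-(k:ℤ)) * Multiplicative.ofAdd (-1:ℤ) := by
          have harg : (-(k:ℤ)-1) = (-(k:ℤ)) + (-1) := by ring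
          rw [harg, ofAdd_add]
        rw [he, hc.2, ih, one_mul]
        exact hq1
    have hz2 := hz (Multiplicative.toAdd g)
    simpa using hz2
  · intro h
    rw [h (PS true), h (PS false)]
    norm_num

end Arith

section Main

variable (c : Multiplicative ℤ → ℝ)

lemma rec_main (hc : IsPosHom c) : Recurrent TE (liftPot T0 PS (pot c)) := by
  refine ⟨(true,(1:GZ)), ?_⟩
  rw [expPressure_ext c hc]
  exact rec_sum c hc

lemma null_main (hc : IsPosHom c) : NullRecurrent TE (liftPot T0 PS (pot c)) := by
  refine ⟨rec_main c hc, (true,(1:GZ)), ?_⟩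
  rw [expPressure_ext c hc]
  exact nullrec_sum c hc

end Main

end Ex16

end CMS

namespace CMS

/-- **Example 1.6.** Asymmetric nearest neighbour random walks on `(ℤ,+)`.  For the full
shift on the alphabet `I = {1,-1}`, the canonical homomorphism `Ψ : I^* → ℤ` and a group
homomorphism `c : (ℤ,+) → (ℝ⁺,·)`, the potential `φ(x) = log c(Ψ(x₁))` lifts to a
recurrent (indeed null recurrent) potential `φ∘π₁` with
`P(φ∘π₁,σ⋊Ψ) = log 2 ≤ log(c(1)+c(-1)) = P(φ,σ)`, with equality iff `c = 1`. -/
theorem example_asymmetric_walk_on_Z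
    (c : Multiplicative ℤ → ℝ) (hc : IsPosHom c) :
    let T : Bool → Bool → Prop := fun _ _ => True
    let Ψ : Bool → Multiplicative ℤ :=
      fun b => Multiplicative.ofAdd (if b then (1 : ℤ) else (-1 : ℤ))
    let φ : MShift T → ℝ := fun x => Real.log (c (Ψ (x.1 0)))
    Recurrent (extT T Ψ) (liftPot T Ψ φ) ∧
    NullRecurrent (extT T Ψ) (liftPot T Ψ φ) ∧
    pressure (extT T Ψ) (liftPot T Ψ φ) = ((Real.log 2 : ℝ) : EReal) ∧
    pressure T φ = ((Real.log (c (Ψ true) + c (Ψ false)) : ℝ) : EReal) ∧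
    Real.log 2 ≤ Real.log (c (Ψ true) + c (Ψ false)) ∧
    (Real.log 2 = Real.log (c (Ψ true) + c (Ψ false)) ↔ ∀ g, c g = 1) := by
  intro T Ψ φ
  refine ⟨Ex16.rec_main c hc, Ex16.null_main c hc, Ex16.pressure_ext c hc,
    Ex16.pressure_base c hc, Ex16.log_le c hc, Ex16.log_iff c hc⟩

end CMS
end

section
/- Let t ≥ 2 and let N be a non-trivial normal subgroup of the free group F_t on generators g₁,…,g_t. Then Σ_{n∈ℕ} card{ω ∈ N : |ω| = n} · (2t−1)^{−n/2} = ∞, where |ω| denotes the word length of ω with respect to {g₁, g₁^{−1}, …, g_t, g_t^{−1}}. In particular, γ := limsup_{n→∞} (card{ω ∈ N : |ω| = n})^{1/n} satisfies γ ≥ (2t−1)^{1/2}. -/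
open scoped ENNReal

namespace CogrowthAux

variable {α : Type*} [DecidableEq α]

/-- The no-cancellation relation between adjacent letters. -/
def Rel (p q : α × Bool) : Prop := ¬(p.1 = q.1 ∧ p.2 = !q.2)

instance : ∀ p q : α × Bool, Decidable (Rel p q) := fun _ _ => instDecidableNot

/-- A word is reduced iff adjacent letters never cancel. -/
def Reduced (L : List (α × Bool)) : Prop := List.Chain' Rel L

lemma rel_iff (p q : α × Bool) : Rel p q ↔ p ≠ (q.1, !q.2) := by
  unfold Rel
  constructor
  · rintro h rfl; exact h ⟨rfl, rfl⟩
  · rintro h ⟨h1, h2⟩; exact h (Prod.ext h1 h2)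

lemma reduce_eq_self {L : List (α × Bool)} (h : Reduced L) : FreeGroup.reduce L = L := by
  induction L with
  | nil => rfl
  | cons x L ih =>
    have hL : Reduced L := h.tail
    rw [FreeGroup.reduce.cons, ih hL]
    cases L with
    | nil => rfl
    | cons y M =>
      have hxy : Rel x y := List.isChain_cons_cons.mp h |>.1
      simp only [Rel] at hxy
      simp [hxy]

lemma reduced_reduce (L : List (α × Bool)) : Reduced (FreeGroup.reduce L) := by
  induction L with
  | nil => exact List.isChain_nil
  | cons x L ih =>
    rw [FreeGroup.reduce.cons]
    rcases hL : FreeGroup.reduce L with _ | ⟨y, M⟩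
    · exact List.isChain_singleton x
    · rw [hL] at ih
      by_cases hc : x.1 = y.1 ∧ x.2 = !y.2
      · simp only [hc, if_true]
        exact ih.tail
      · simp only [hc, if_false]
        exact List.isChain_cons_cons.mpr ⟨hc, ih⟩

lemma reduced_toWord (x : FreeGroup α) : Reduced x.toWord := by
  have := reduced_reduce x.toWord
  rwa [FreeGroup.reduce_toWord] at this

lemma reduced_invRev {L : List (α × Bool)} (h : Reduced L) : Reduced (FreeGroup.invRev L) := by
  unfold FreeGroup.invRev Reduced List.Chain'
  rw [List.isChain_reverse, List.isChain_map]
  refine h.imp ?_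
  rintro ⟨a, b⟩ ⟨c, d⟩ hr
  simp only [Rel, flip] at *
  rintro ⟨h1, h2⟩
  rw [Bool.not_not] at h2
  exact hr ⟨h1.symm, h2.symm⟩

end CogrowthAux

namespace CogrowthAux

section Words

variable {t : ℕ}

/-- An equivalence between the alphabet and `Fin (2*t)`. -/
noncomputable def alphaEquiv (t : ℕ) : (Fin t × Bool) ≃ Fin (2 * t) :=
  Fintype.equivFinOfCardEq (by simp [Fintype.card_prod, mul_comm])

/-- Pick a letter different from `(v.1, !v.2)` (the inverse of `v`), injectively
parametrized by `Fin (2*t-1)`. -/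
noncomputable def avoid (ht : 1 ≤ t) (v : Fin t × Bool) (c : Fin (2 * t - 1)) :
    Fin t × Bool :=
  (alphaEquiv t).symm
    (Fin.cast (by omega) ((Fin.cast (by omega : 2 * t = 2 * t - 1 + 1)
      ((alphaEquiv t) (v.1, !v.2))).succAbove c))

lemma avoid_ne (ht : 1 ≤ t) (v : Fin t × Bool) (c : Fin (2 * t - 1)) :
    avoid ht v c ≠ (v.1, !v.2) := by
  unfold avoid
  intro h
  apply Fin.succAbove_ne (Fin.cast (by omega : 2 * t = 2 * t - 1 + 1)
      ((alphaEquiv t) (v.1, !v.2))) c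
  have := congrArg (alphaEquiv t) h
  simp only [Equiv.apply_symm_apply] at this
  exact (Fin.cast_injective (by omega : 2 * t - 1 + 1 = 2 * t)) (by simpa using this)

lemma avoid_injective (ht : 1 ≤ t) (v : Fin t × Bool) :
    Function.Injective (avoid ht v) := by
  intro c c' h
  unfold avoid at h
  have h1 := (alphaEquiv t).symm.injective h
  have h2 := Fin.cast_injective _ h1
  exact Fin.succAbove_right_injective h2

/-- Build a reduced word ending with `x`, reading choices backwards. -/
noncomputable def W (ht : 1 ≤ t) (x : Fin t × Bool) : List (Fin (2 * t - 1)) → List (Fin t × Bool)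
  | [] => [x]
  | c :: cs => avoid ht ((W ht x cs).headD x) c :: W ht x cs

lemma W_ne_nil (ht : 1 ≤ t) (x : Fin t × Bool) (cs : List (Fin (2 * t - 1))) :
    W ht x cs ≠ [] := by
  cases cs <;> simp [W]

lemma W_length (ht : 1 ≤ t) (x : Fin t × Bool) (cs : List (Fin (2 * t - 1))) :
    (W ht x cs).length = cs.length + 1 := by
  induction cs with
  | nil => rfl
  | cons c cs ih => simp [W, ih]

lemma W_getLast? (ht : 1 ≤ t) (x : Fin t × Bool) (cs : List (Fin (2 * t - 1))) :
    (W ht x cs).getLast? = some x := by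
  induction cs with
  | nil => rfl
  | cons c cs ih =>
    rcases h : W ht x cs with _ | ⟨d, ds⟩
    · exact absurd h (W_ne_nil ht x cs)
    · rw [W, h, List.getLast?_cons_cons, ← h, ih]

lemma W_reduced (ht : 1 ≤ t) (x : Fin t × Bool) (cs : List (Fin (2 * t - 1))) :
    Reduced (W ht x cs) := by
  induction cs with
  | nil => exact List.isChain_singleton x
  | cons c cs ih =>
    rw [W, Reduced, List.Chain', List.isChain_cons]
    refine ⟨?_, ih⟩
    intro y hy
    rcases h : W ht x cs with _ | ⟨d, ds⟩
    · exact absurd h (W_ne_nil ht x cs)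
    · rw [h] at hy
      simp only [List.head?_cons, Option.mem_def, Option.some.injEq] at hy
      subst hy
      rw [rel_iff]
      have := avoid_ne ht ((W ht x cs).headD x) c
      rw [h] at this
      simpa using this

lemma W_injective (ht : 1 ≤ t) (x : Fin t × Bool) :
    Function.Injective (W ht x) := by
  intro cs
  induction cs with
  | nil =>
    intro cs' h
    cases cs' with
    | nil => rfl
    | cons c' cs' =>
      have := congrArg List.length h
      rw [W_length, W_length] at this
      simp at this
  | cons c cs ih =>
    intro cs' h
    cases cs' with
    | nil =>
      have := congrArg List.length h
      rw [W_length, W_length] at this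
      simp at this
    | cons c' cs' =>
      rw [W, W] at h
      have htail : W ht x cs = W ht x cs' := by
        exact List.tail_eq_of_cons_eq h
      have hcs : cs = cs' := ih htail
      subst hcs
      have hhead := List.head_eq_of_cons_eq h
      have := avoid_injective ht ((W ht x cs).headD x) hhead
      rw [this]

end Words

end CogrowthAux

namespace CogrowthAux

section Count

variable {t : ℕ}

lemma level_inj (N : Subgroup (FreeGroup (Fin t))) (m : ℕ) :
    ∃ f : {ω : FreeGroup (Fin t) // ω ∈ N ∧ FreeGroup.norm ω = m} → (Fin m → Fin t × Bool),
      Function.Injective f := by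
  have hlen : ∀ ω : {ω : FreeGroup (Fin t) // ω ∈ N ∧ FreeGroup.norm ω = m},
      (ω.1.toWord).length = m := fun ω => ω.2.2
  refine ⟨fun ω i => (ω.1.toWord)[(i : ℕ)]'(by rw [hlen]; exact i.isLt), ?_⟩
  intro ω ω' h
  have : ω.1.toWord = ω'.1.toWord := by
    apply List.ext_getElem (by rw [hlen, hlen])
    intro n h₁ h₂
    have hn : n < m := by rw [← hlen ω]; exact h₁
    exact congrFun h ⟨n, hn⟩
  exact Subtype.ext (FreeGroup.toWord_injective this)

lemma level_finite (N : Subgroup (FreeGroup (Fin t))) (m : ℕ) :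
    Finite {ω : FreeGroup (Fin t) // ω ∈ N ∧ FreeGroup.norm ω = m} := by
  obtain ⟨f, hf⟩ := level_inj N m
  exact Finite.of_injective f hf

lemma level_card_le (N : Subgroup (FreeGroup (Fin t))) (m : ℕ) :
    Nat.card {ω : FreeGroup (Fin t) // ω ∈ N ∧ FreeGroup.norm ω = m} ≤ (2 * t) ^ m := by
  obtain ⟨f, hf⟩ := level_inj N m
  have := Nat.card_le_card_of_injective f hf
  simpa [Nat.card_eq_fintype_card, Fintype.card_fun, mul_comm] using this

lemma key (ht : 2 ≤ t) (N : Subgroup (FreeGroup (Fin t))) (hnorm : N.Normal) (hN : N ≠ ⊥) :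
    ∃ k : ℕ, 1 ≤ k ∧ ∀ j : ℕ,
      (2 * t - 1) ^ j ≤
        Nat.card {ω : FreeGroup (Fin t) // ω ∈ N ∧ FreeGroup.norm ω = 2 * j + 2 + k} := by
  have ht1 : 1 ≤ t := by omega
  -- a nontrivial element of N
  have hex : ∃ w ∈ N, w ≠ 1 := by
    by_contra hcon
    push_neg at hcon
    exact hN ((Subgroup.eq_bot_iff_forall N).mpr hcon)
  obtain ⟨w, hwN, hw1⟩ := hex
  have hL : w.toWord ≠ [] := fun h => hw1 (FreeGroup.toWord_eq_nil_iff.mp h)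
  obtain ⟨hd, tl, hLdecomp⟩ := List.exists_cons_of_ne_nil hL
  set L : List (Fin t × Bool) := w.toWord with hLdef
  set k : ℕ := L.length with hk
  have hk1 : 1 ≤ k := by rw [hk, hLdecomp]; simp
  set b : Fin t × Bool := L.getLast hL with hb
  -- choose a good final letter x
  have hx : ∃ x : Fin t × Bool, x ≠ (hd.1, !hd.2) ∧ x ≠ b := by
    by_contra hcon
    push_neg at hcon
    have hsub : (Finset.univ : Finset (Fin t × Bool)) ⊆ {(hd.1, !hd.2), b} := by
      intro x _
      rcases eq_or_ne x (hd.1, !hd.2) with h | h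
      · simp [h]
      · simp [hcon x h]
    have h1 : (Finset.univ : Finset (Fin t × Bool)).card ≤ 2 :=
      le_trans (Finset.card_le_card hsub)
        (le_trans (Finset.card_insert_le _ _) (by simp))
    rw [Finset.card_univ] at h1
    simp [Fintype.card_prod] at h1
    omega
  obtain ⟨x, hxa, hxb⟩ := hx
  refine ⟨k, hk1, fun j => ?_⟩
  have : Finite {ω : FreeGroup (Fin t) // ω ∈ N ∧ FreeGroup.norm ω = 2 * j + 2 + k} :=
    level_finite N _
  -- the injection
  have main : ∃ Φ : (Fin j → Fin (2 * t - 1)) →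
      {ω : FreeGroup (Fin t) // ω ∈ N ∧ FreeGroup.norm ω = 2 * j + 2 + k},
      Function.Injective Φ := by
    set Mw : (Fin j → Fin (2 * t - 1)) → List (Fin t × Bool) :=
      fun cs => W ht1 x (List.ofFn cs) ++ (L ++ FreeGroup.invRev (W ht1 x (List.ofFn cs)))
      with hMw
    have hred : ∀ cs, Reduced (Mw cs) := by
      intro cs
      set g : List (Fin t × Bool) := W ht1 x (List.ofFn cs) with hg
      have hgred : Reduced g := W_reduced ht1 x _
      have hglast : g.getLast? = some x := W_getLast? ht1 x _
      rw [hMw, Reduced, List.Chain', List.isChain_append]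
      refine ⟨hgred, ?_, ?_⟩
      · rw [List.isChain_append]
        refine ⟨reduced_toWord w, reduced_invRev hgred, ?_⟩
        intro p hp q hq
        rw [List.getLast?_eq_getLast hL] at hp
        have hp' : p = b := by rw [hb]; symm; simpa using hp
        have hq' : q = (x.1, !x.2) := by
          rw [FreeGroup.invRev, List.head?_reverse, List.getLast?_map, hglast] at hq
          symm; simpa using hq
        subst hp' hq'
        rw [rel_iff]
        simp only [Bool.not_not]
        intro hbx
        exact hxb (by rw [hbx])
      · intro p hp q hq
        have hp' : p = x := by rw [hglast] at hp; symm; simpa using hp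
        have hq' : q = hd := by
          rw [hLdecomp] at hq
          symm; simpa using hq
        subst hp' hq'
        rw [rel_iff]
        exact hxa
    have hprop : ∀ cs, FreeGroup.mk (Mw cs) ∈ N ∧
        FreeGroup.norm (FreeGroup.mk (Mw cs)) = 2 * j + 2 + k := by
      intro cs
      set g : List (Fin t × Bool) := W ht1 x (List.ofFn cs) with hg
      have hglen : g.length = j + 1 := by rw [hg, W_length]; simp
      constructor
      · have hconj : FreeGroup.mk g * w * (FreeGroup.mk g)⁻¹ = FreeGroup.mk (Mw cs) := by
          conv_lhs => rw [← FreeGroup.mk_toWord (x := w)]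
          rw [FreeGroup.inv_mk, FreeGroup.mul_mk, FreeGroup.mul_mk, List.append_assoc]
        rw [← hconj]
        exact hnorm.conj_mem w hwN (FreeGroup.mk g)
      · have htoWord : (FreeGroup.mk (Mw cs)).toWord = Mw cs := by
          rw [FreeGroup.toWord_mk, reduce_eq_self (hred cs)]
        rw [FreeGroup.norm, htoWord, hMw]
        simp only [List.length_append, FreeGroup.invRev_length, hglen, ← hk]
        have hglen' : (W ht1 x (List.ofFn cs)).length = j + 1 := by rw [W_length]; simp
        omega
    refine ⟨fun cs => ⟨FreeGroup.mk (Mw cs), hprop cs⟩, ?_⟩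
    intro cs cs' h
    have h0 : FreeGroup.mk (Mw cs) = FreeGroup.mk (Mw cs') := congrArg Subtype.val h
    have h1 : Mw cs = Mw cs' := by
      have := congrArg FreeGroup.toWord h0
      rwa [FreeGroup.toWord_mk, FreeGroup.toWord_mk, reduce_eq_self (hred cs),
        reduce_eq_self (hred cs')] at this
    rw [hMw] at h1
    have hlen : (W ht1 x (List.ofFn cs)).length = (W ht1 x (List.ofFn cs')).length := by
      rw [W_length, W_length]; simp
    have h2 := (List.append_inj h1 hlen).1
    exact List.ofFn_injective (W_injective ht1 x h2)
  obtain ⟨Φ, hΦ⟩ := main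
  have := Nat.card_le_card_of_injective Φ hΦ
  calc (2 * t - 1) ^ j = Nat.card (Fin j → Fin (2 * t - 1)) := by
        simp [Nat.card_eq_fintype_card, Fintype.card_fun]
    _ ≤ _ := this

end Count

end CogrowthAux


open Filter Topology CogrowthAux

/-- **(1.2), Subsection 1.2.**  For a non-trivial normal subgroup `N` of the free group
`F_t` (`t ≥ 2`), the series `∑_n card{ω ∈ N : |ω| = n} (2t-1)^{-n/2}` diverges; in
particular `γ = limsup_n card{ω ∈ N : |ω| = n}^{1/n} ≥ (2t-1)^{1/2}`. -/
theorem cogrowth_series_diverges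
    (t : ℕ) (ht : 2 ≤ t) (N : Subgroup (FreeGroup (Fin t)))
    (hnorm : N.Normal) (hN : N ≠ ⊥) :
    (∑' n : ℕ,
        (Nat.card {ω : FreeGroup (Fin t) // ω ∈ N ∧ FreeGroup.norm ω = n} : ℝ≥0∞) *
          ((2 * t - 1 : ℕ) : ℝ≥0∞) ^ (-(n : ℝ) / 2) = ∞) ∧
    Real.sqrt ((2 * t - 1 : ℕ) : ℝ) ≤
      Filter.limsup (fun n : ℕ =>
        ((Nat.card {ω : FreeGroup (Fin t) // ω ∈ N ∧ FreeGroup.norm ω = n} : ℝ)) ^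
          ((n : ℝ)⁻¹)) Filter.atTop := by
  obtain ⟨k, hk1, hkey⟩ := key ht N hnorm hN
  have ht3 : (3 : ℕ) ≤ 2 * t - 1 := by omega
  set a : ℕ → ℕ :=
    fun n => Nat.card {ω : FreeGroup (Fin t) // ω ∈ N ∧ FreeGroup.norm ω = n} with ha
  constructor
  · -- the series diverges
    set x : ℝ≥0∞ := ((2 * t - 1 : ℕ) : ℝ≥0∞) with hx
    have hx0 : x ≠ 0 := by
      rw [hx]; exact_mod_cast (by omega : (2*t-1 : ℕ) ≠ 0)
    have hxt : x ≠ ⊤ := ENNReal.natCast_ne_top _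
    set c : ℝ≥0∞ := x ^ (-(((2 : ℝ) + k) / 2)) with hc
    have hc0 : 0 < c := ENNReal.rpow_pos (by positivity) hxt
    have hlow : ∀ j : ℕ, c ≤ (a (2*j+2+k) : ℝ≥0∞) * x ^ (-((2*j+2+k : ℕ) : ℝ) / 2) := by
      intro j
      have h1 : ((2 * t - 1) ^ j : ℕ) ≤ a (2*j+2+k) := hkey j
      have h2 : x ^ (j : ℝ) ≤ (a (2*j+2+k) : ℝ≥0∞) := by
        rw [ENNReal.rpow_natCast, hx]
        exact_mod_cast h1
      calc c = x ^ ((j : ℝ) + (-((2*j+2+k : ℕ) : ℝ) / 2)) := by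
            rw [hc]; congr 1; push_cast; ring
        _ = x ^ (j : ℝ) * x ^ (-((2*j+2+k : ℕ) : ℝ) / 2) := ENNReal.rpow_add _ _ hx0 hxt
        _ ≤ _ := mul_le_mul_left h2 _
    by_contra hcon
    have htend := ENNReal.tendsto_atTop_zero_of_tsum_ne_top hcon
    have hev : ∀ᶠ n in atTop,
        (a n : ℝ≥0∞) * x ^ (-(n : ℝ) / 2) < c :=
      htend.eventually (eventually_mem_set.mpr (Iio_mem_nhds hc0))
    obtain ⟨n₀, hn₀⟩ := eventually_atTop.mp hev
    have := hn₀ (2*n₀+2+k) (by omega)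
    exact absurd (hlow n₀) (not_le.mpr this)
  · -- the limsup bound
    set s : ℝ := ((2 * t - 1 : ℕ) : ℝ) with hs
    have hs3 : (3 : ℝ) ≤ s := by rw [hs]; exact_mod_cast ht3
    have hs0 : (0 : ℝ) < s := by linarith
    set u : ℕ → ℝ := fun n => ((a n : ℝ)) ^ ((n : ℝ)⁻¹) with hu
    have hbdd : IsBoundedUnder (· ≤ ·) atTop u := by
      refine isBoundedUnder_of ⟨(2 * t : ℝ), fun n => ?_⟩
      rcases Nat.eq_zero_or_pos n with rfl | hn
      · simp [hu, Real.rpow_zero]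
        norm_num
        exact_mod_cast by omega
      · have h1 : (a n : ℝ) ≤ ((2 * t : ℕ) : ℝ) ^ n := by
          exact_mod_cast level_card_le N n
        have h2 : u n ≤ (((2 * t : ℕ) : ℝ) ^ n) ^ ((n : ℝ)⁻¹) :=
          Real.rpow_le_rpow (by positivity) h1 (by positivity)
        calc u n ≤ _ := h2
          _ = ((2 * t : ℕ) : ℝ) := by
              rw [← Real.rpow_natCast ((2 * t : ℕ) : ℝ) n, ← Real.rpow_mul (by positivity),
                mul_inv_cancel₀ (by exact_mod_cast hn.ne'), Real.rpow_one]
          _ = (2 * t : ℝ) := by push_cast; ring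
    apply le_of_forall_sub_le
    intro ε hε
    apply Filter.le_limsup_of_frequently_le _ hbdd
    -- the subsequence tends to √s
    have hE : Tendsto (fun j : ℕ => (j : ℝ) / ((2*j+2+k : ℕ) : ℝ)) atTop (𝓝 (2⁻¹)) := by
      have hA : Tendsto (fun j : ℕ => ((2 + k : ℝ)) / j) atTop (𝓝 0) :=
        tendsto_const_div_atTop_nhds_zero_nat _
      have hB : Tendsto (fun j : ℕ => 2 + ((2 + k : ℝ)) / j) atTop (𝓝 2) := by
        simpa using (tendsto_const_nhds (x := (2:ℝ)) (f := atTop)).add hA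
      have hC : Tendsto (fun j : ℕ => (2 + ((2 + k : ℝ)) / j)⁻¹) atTop (𝓝 (2⁻¹)) :=
        hB.inv₀ (by norm_num)
      refine hC.congr' ?_
      filter_upwards [eventually_ge_atTop 1] with j hj
      have hj0 : (j : ℝ) ≠ 0 := by exact_mod_cast Nat.one_le_iff_ne_zero.mp hj
      push_cast
      field_simp
      ring
    have hT : Tendsto (fun j : ℕ => s ^ ((j : ℝ) / ((2*j+2+k : ℕ) : ℝ))) atTop
        (𝓝 (Real.sqrt s)) := by
      have hcont : ContinuousAt (fun r : ℝ => s ^ r) (2⁻¹) :=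
        Real.continuousAt_const_rpow (ne_of_gt hs0)
      have := hcont.tendsto.comp hE
      rwa [show s ^ (2⁻¹ : ℝ) = Real.sqrt s by
        rw [Real.sqrt_eq_rpow, one_div]] at this
    have hev : ∀ᶠ j : ℕ in atTop,
        Real.sqrt s - ε < s ^ ((j : ℝ) / ((2*j+2+k : ℕ) : ℝ)) :=
      hT.eventually (eventually_mem_set.mpr (Ioi_mem_nhds (by linarith)))
    obtain ⟨j₀, hj₀⟩ := eventually_atTop.mp hev
    rw [frequently_atTop]
    intro m
    set j : ℕ := max m j₀ with hj
    refine ⟨2*j+2+k, by omega, ?_⟩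
    have h1 : Real.sqrt s - ε < s ^ ((j : ℝ) / ((2*j+2+k : ℕ) : ℝ)) :=
      hj₀ j (le_max_right _ _)
    have h2 : s ^ ((j : ℝ) / ((2*j+2+k : ℕ) : ℝ)) ≤ u (2*j+2+k) := by
      have hle : (s ^ j : ℝ) ≤ (a (2*j+2+k) : ℝ) := by
        rw [hs]
        exact_mod_cast hkey j
      have h3 : ((s ^ j : ℝ)) ^ (((2*j+2+k : ℕ) : ℝ)⁻¹) ≤ u (2*j+2+k) :=
        Real.rpow_le_rpow (by positivity) hle (by positivity)
      calc s ^ ((j : ℝ) / ((2*j+2+k : ℕ) : ℝ))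
          = ((s ^ j : ℝ)) ^ (((2*j+2+k : ℕ) : ℝ)⁻¹) := by
            rw [← Real.rpow_natCast s j, ← Real.rpow_mul (le_of_lt hs0), div_eq_mul_inv]
        _ ≤ _ := h3
    exact le_trans (le_of_lt h1) h2
end
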